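/- arXiv:1404.6928 — 8 statements merged into one kernel-verified Lean document; each statement's English description precedes it below -/
import Mathlib

section
/- For every integer n ≥ 2, the operator Ω defined on bounded measurable functions F : [0,1] → ℝ by ΩF(x) = n·x^(n-1) − (n−1)·x^n − n·x^(n-1)·∫₀^(1−x) F(z) dz is a contraction in the supremum norm with contraction constant ((n−1)/n)^(n−1): for all bounded measurable F₁, F₂ : [0,1] → ℝ and all x ∈ [0,1], |ΩF₁(x) − ΩF₂(x)| ≤ ((n−1)/n)^(n−1) · sup_{z ∈ [0,1]} |F₁(z) − F₂(z)|, and moreover ((n−1)/n)^(n−1) < 1. -/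
open Set MeasureTheory

lemma poly_key (n : ℕ) (hn : 2 ≤ n) (x : ℝ) (hx0 : 0 ≤ x) (hx1 : x ≤ 1) :
    (n:ℝ) * x ^ (n-1) * (1 - x) ≤ (((n:ℝ) - 1) / n) ^ (n-1) := by
  have hn0 : (0:ℝ) < n := by positivity
  have hm : (1:ℝ) ≤ (n:ℝ) - 1 := by
    have : (2:ℝ) ≤ n := by exact_mod_cast hn
    linarith
  have hm0 : (0:ℝ) < (n:ℝ) - 1 := by linarith
  set mR : ℝ := (n:ℝ) - 1 with hmR
  have hmcast : ((n - 1 : ℕ) : ℝ) = mR := by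
    have := Nat.cast_sub (by omega : 1 ≤ n) (R := ℝ)
    simpa using this
  set p₁ : ℝ := x * n / mR with hp₁def
  set p₂ : ℝ := (1 - x) * n with hp₂def
  have hp₁ : 0 ≤ p₁ := by positivity
  have hp₂ : 0 ≤ p₂ := by
    have : 0 ≤ 1 - x := by linarith
    positivity
  have hw : mR / n + 1 / n = 1 := by
    field_simp
    rw [hmR]; ring
  have h := Real.geom_mean_le_arith_mean2_weighted
    (by positivity : (0:ℝ) ≤ mR / n) (by positivity : (0:ℝ) ≤ 1 / (n:ℝ)) hp₁ hp₂ hw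
  have hsum : mR / n * p₁ + 1 / n * p₂ = 1 := by
    rw [hp₁def, hp₂def]
    field_simp
    ring
  rw [hsum] at h
  -- raise to the n-th power
  have hln : (0:ℝ) ≤ p₁ ^ (mR / n) * p₂ ^ ((1:ℝ) / n) := by positivity
  have h2 : (p₁ ^ (mR / n) * p₂ ^ ((1:ℝ) / n)) ^ n ≤ 1 := by
    calc (p₁ ^ (mR / n) * p₂ ^ ((1:ℝ) / n)) ^ n ≤ 1 ^ n := pow_le_pow_left₀ hln h n
    _ = 1 := one_pow n
  have hexp : (p₁ ^ (mR / n) * p₂ ^ ((1:ℝ) / n)) ^ n = p₁ ^ (n-1) * p₂ := by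
    rw [mul_pow, ← Real.rpow_natCast (p₁ ^ (mR / n)) n, ← Real.rpow_natCast (p₂ ^ ((1:ℝ)/n)) n,
      ← Real.rpow_mul hp₁, ← Real.rpow_mul hp₂]
    have e1 : mR / n * n = mR := by field_simp
    have e2 : (1:ℝ) / n * n = 1 := by field_simp
    rw [e1, e2, Real.rpow_one, ← hmcast, Real.rpow_natCast]
  rw [hexp] at h2
  -- h2 : p₁ ^ (n-1) * p₂ ≤ 1
  have hpos : (0:ℝ) < (mR / n) ^ (n-1) := by positivity
  have key : (n:ℝ) * x ^ (n-1) * (1 - x) = (p₁ ^ (n-1) * p₂) * (mR / n) ^ (n-1) := by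
    rw [hp₁def, hp₂def, div_pow, mul_pow, div_pow]
    field_simp
  rw [key]
  calc (p₁ ^ (n-1) * p₂) * (mR / n) ^ (n-1) ≤ 1 * (mR / n) ^ (n-1) :=
        mul_le_mul_of_nonneg_right h2 hpos.le
    _ = (mR / n) ^ (n-1) := one_mul _

theorem stmt_0 (n : ℕ) (hn : 2 ≤ n)
    (F₁ F₂ : ℝ → ℝ) (hm₁ : Measurable F₁) (hm₂ : Measurable F₂)
    (hb₁ : ∃ C : ℝ, ∀ x ∈ Icc (0:ℝ) 1, |F₁ x| ≤ C)
    (hb₂ : ∃ C : ℝ, ∀ x ∈ Icc (0:ℝ) 1, |F₂ x| ≤ C)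
    (x : ℝ) (hx : x ∈ Icc (0:ℝ) 1) :
    |((n:ℝ) * x ^ (n-1) - ((n:ℝ) - 1) * x ^ n
        - (n:ℝ) * x ^ (n-1) * ∫ z in (0:ℝ)..(1 - x), F₁ z)
      - ((n:ℝ) * x ^ (n-1) - ((n:ℝ) - 1) * x ^ n
        - (n:ℝ) * x ^ (n-1) * ∫ z in (0:ℝ)..(1 - x), F₂ z)|
      ≤ (((n:ℝ) - 1) / n) ^ (n-1) * sSup ((fun z => |F₁ z - F₂ z|) '' Icc (0:ℝ) 1)
    ∧ (((n:ℝ) - 1) / n) ^ (n-1) < 1 := by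
  obtain ⟨hx0, hx1⟩ := hx
  obtain ⟨C₁, hC₁⟩ := hb₁
  obtain ⟨C₂, hC₂⟩ := hb₂
  set M : ℝ := sSup ((fun z => |F₁ z - F₂ z|) '' Icc (0:ℝ) 1) with hMdef
  have hbdd : BddAbove ((fun z => |F₁ z - F₂ z|) '' Icc (0:ℝ) 1) := by
    refine ⟨C₁ + C₂, ?_⟩
    rintro _ ⟨z, hz, rfl⟩
    calc |F₁ z - F₂ z| ≤ |F₁ z| + |F₂ z| := abs_sub _ _
      _ ≤ C₁ + C₂ := add_le_add (hC₁ z hz) (hC₂ z hz)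
  have hmem : ∀ z ∈ Icc (0:ℝ) 1, |F₁ z - F₂ z| ≤ M :=
    fun z hz => le_csSup hbdd ⟨z, hz, rfl⟩
  have hM0 : 0 ≤ M :=
    le_trans (abs_nonneg _) (hmem 0 ⟨le_refl _, zero_le_one⟩)
  -- integrability
  have hsub : Set.uIoc (0:ℝ) (1 - x) ⊆ Icc (0:ℝ) 1 := by
    rw [Set.uIoc_of_le (by linarith : (0:ℝ) ≤ 1 - x)]
    intro z hz
    exact ⟨hz.1.le, hz.2.trans (by linarith)⟩
  have hint : ∀ (F : ℝ → ℝ) (C : ℝ), Measurable F → (∀ z ∈ Icc (0:ℝ) 1, |F z| ≤ C) →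
      IntervalIntegrable F volume 0 (1 - x) := by
    intro F C hm hC
    rw [intervalIntegrable_iff]
    apply Measure.integrableOn_of_bounded (M := C) (((measure_mono hsub).trans_lt measure_Icc_lt_top).ne) hm.aestronglyMeasurable
    filter_upwards [ae_restrict_mem measurableSet_uIoc] with z hz
    exact hC z (hsub hz)
  have hi₁ := hint F₁ C₁ hm₁ hC₁
  have hi₂ := hint F₂ C₂ hm₂ hC₂
  have hintsub : (∫ z in (0:ℝ)..(1 - x), F₁ z) - ∫ z in (0:ℝ)..(1 - x), F₂ z
      = ∫ z in (0:ℝ)..(1 - x), (F₁ z - F₂ z) := (intervalIntegral.integral_sub hi₁ hi₂).symm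
  have hintbound : |∫ z in (0:ℝ)..(1 - x), (F₁ z - F₂ z)| ≤ M * (1 - x) := by
    have := intervalIntegral.norm_integral_le_of_norm_le_const
      (f := fun z => F₁ z - F₂ z) (a := 0) (b := 1 - x) (C := M)
      (fun z hz => hmem z (hsub hz))
    simpa [abs_of_nonneg (by linarith : (0:ℝ) ≤ 1 - x)] using this
  constructor
  · have heq : ((n:ℝ) * x ^ (n-1) - ((n:ℝ) - 1) * x ^ n
        - (n:ℝ) * x ^ (n-1) * ∫ z in (0:ℝ)..(1 - x), F₁ z)
      - ((n:ℝ) * x ^ (n-1) - ((n:ℝ) - 1) * x ^ n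
        - (n:ℝ) * x ^ (n-1) * ∫ z in (0:ℝ)..(1 - x), F₂ z)
      = -((n:ℝ) * x ^ (n-1) * ∫ z in (0:ℝ)..(1 - x), (F₁ z - F₂ z)) := by
      rw [← hintsub]; ring
    rw [heq, abs_neg, abs_mul]
    have hnx : 0 ≤ (n:ℝ) * x ^ (n-1) := by positivity
    rw [abs_of_nonneg hnx]
    calc (n:ℝ) * x ^ (n-1) * |∫ z in (0:ℝ)..(1 - x), (F₁ z - F₂ z)|
        ≤ (n:ℝ) * x ^ (n-1) * (M * (1 - x)) :=
          mul_le_mul_of_nonneg_left hintbound hnx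
      _ = ((n:ℝ) * x ^ (n-1) * (1 - x)) * M := by ring
      _ ≤ (((n:ℝ) - 1) / n) ^ (n-1) * M :=
          mul_le_mul_of_nonneg_right (poly_key n hn x hx0 hx1) hM0
  · apply pow_lt_one₀
    · have : (2:ℝ) ≤ n := by exact_mod_cast hn
      apply div_nonneg (by linarith) (by positivity)
    · have hn0 : (0:ℝ) < n := by positivity
      rw [div_lt_one hn0]; linarith
    · omega
end

section
/- For every integer n ≥ 2, there exists a unique bounded measurable function F : [0,1] → ℝ satisfying F(x) = n·x^(n-1) − (n−1)·x^n − n·x^(n-1)·∫₀^(1−x) F(z) dz for all x ∈ [0,1]. -/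
open Set MeasureTheory intervalIntegral

noncomputable def extU (u : C(Icc (0:ℝ) 1, ℝ)) : ℝ → ℝ := Set.IccExtend zero_le_one u

lemma extU_cont (u : C(Icc (0:ℝ) 1, ℝ)) : Continuous (extU u) :=
  u.continuous.comp continuous_projIcc

noncomputable def Fof (n : ℕ) (u : C(Icc (0:ℝ) 1, ℝ)) : ℝ → ℝ :=
  fun z => (n:ℝ) * z ^ (n-1) - ((n:ℝ) - 1) * z ^ n - (n:ℝ) * z ^ (n-1) * extU u (1 - z)

lemma Fof_cont (n : ℕ) (u : C(Icc (0:ℝ) 1, ℝ)) : Continuous (Fof n u) := by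
  unfold Fof
  exact ((continuous_const.mul (continuous_pow _)).sub
    (continuous_const.mul (continuous_pow _))).sub
    ((continuous_const.mul (continuous_pow _)).mul
      ((extU_cont u).comp (continuous_const.sub continuous_id)))

noncomputable def Phi (n : ℕ) (u : C(Icc (0:ℝ) 1, ℝ)) : C(Icc (0:ℝ) 1, ℝ) :=
  ⟨fun t => ∫ z in (0:ℝ)..(t:ℝ), Fof n u z,
   (intervalIntegral.continuous_primitive
      (fun a b => (Fof_cont n u).intervalIntegrable a b) 0).comp continuous_subtype_val⟩

lemma Phi_apply (n : ℕ) (u : C(Icc (0:ℝ) 1, ℝ)) (t : Icc (0:ℝ) 1) :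
    Phi n u t = ∫ z in (0:ℝ)..(t:ℝ), Fof n u z := rfl

lemma integral_npow (n : ℕ) (hn : 2 ≤ n) (t : ℝ) :
    ∫ z in (0:ℝ)..t, (n:ℝ) * z ^ (n-1) = t ^ n := by
  rw [intervalIntegral.integral_const_mul, integral_pow]
  have h1 : n - 1 + 1 = n := by omega
  have h2 : ((n-1:ℕ):ℝ) + 1 = (n:ℝ) := by
    have : (1:ℕ) ≤ n := by omega
    push_cast [Nat.cast_sub this]; ring
  rw [h1, h2, zero_pow (by omega : n ≠ 0)]
  have hn0 : (n:ℝ) ≠ 0 := by positivity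
  field_simp
  simp

lemma key_integral (n : ℕ) (hn : 2 ≤ n) :
    ∫ z in (0:ℝ)..1, (n:ℝ) * z ^ (n-1) * (1 - z) = 1/((n:ℝ)+1) := by
  have heq : ∀ z : ℝ, (n:ℝ) * z ^ (n-1) * (1 - z) = (n:ℝ) * z ^ (n-1) - (n:ℝ) * z ^ n := by
    intro z
    have h1 : n = n - 1 + 1 := by omega
    calc (n:ℝ) * z ^ (n-1) * (1 - z) = (n:ℝ) * z ^ (n-1) - (n:ℝ) * z ^ (n - 1 + 1) := by
          rw [pow_succ]; ring
      _ = (n:ℝ) * z ^ (n-1) - (n:ℝ) * z ^ n := by rw [← h1]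
  simp only [heq]
  rw [intervalIntegral.integral_sub (f := fun z : ℝ => (n:ℝ) * z ^ (n-1)) (g := fun z : ℝ => (n:ℝ) * z ^ n)
      ((continuous_const.mul (continuous_pow _) : Continuous fun z : ℝ => (n:ℝ) * z ^ (n-1)).intervalIntegrable _ _)
      ((continuous_const.mul (continuous_pow _) : Continuous fun z : ℝ => (n:ℝ) * z ^ n).intervalIntegrable _ _),
    integral_npow n hn, intervalIntegral.integral_const_mul, integral_pow]
  have hn0 : (n:ℝ) + 1 ≠ 0 := by positivity
  field_simp
  simp

lemma extU_dist (u v : C(Icc (0:ℝ) 1, ℝ)) (y : ℝ) :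
    |extU u y - extU v y| ≤ dist u v := by
  have := ContinuousMap.dist_apply_le_dist (f := u) (g := v) (Set.projIcc 0 1 zero_le_one y)
  simpa [extU, Set.IccExtend, Real.dist_eq] using this

lemma Phi_dist_le (n : ℕ) (hn : 2 ≤ n) (u v : C(Icc (0:ℝ) 1, ℝ)) (t : Icc (0:ℝ) 1) :
    |Phi n u t - Phi n v t| ≤ (t:ℝ) ^ n * dist u v := by
  obtain ⟨t, ht0, ht1⟩ := t
  simp only [Phi_apply]
  rw [← intervalIntegral.integral_sub ((Fof_cont n u).intervalIntegrable _ _)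
      ((Fof_cont n v).intervalIntegrable _ _)]
  calc |∫ z in (0:ℝ)..t, (Fof n u z - Fof n v z)|
      ≤ ∫ z in (0:ℝ)..t, |Fof n u z - Fof n v z| :=
        intervalIntegral.abs_integral_le_integral_abs ht0
    _ ≤ ∫ z in (0:ℝ)..t, (n:ℝ) * z ^ (n-1) * dist u v := by
        apply intervalIntegral.integral_mono_on ht0
        · exact ((Fof_cont n u).sub (Fof_cont n v)).abs.intervalIntegrable _ _
        · exact (((continuous_const.mul (continuous_pow _)).mul continuous_const)).intervalIntegrable _ _
        · intro z hz
          have hz0 : (0:ℝ) ≤ z := hz.1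
          have hdiff : Fof n u z - Fof n v z
              = (n:ℝ) * z ^ (n-1) * (extU v (1-z) - extU u (1-z)) := by
            unfold Fof; ring
          rw [hdiff, abs_mul, abs_of_nonneg (by positivity : (0:ℝ) ≤ (n:ℝ) * z ^ (n-1))]
          have h2 := extU_dist v u (1 - z)
          rw [dist_comm] at h2
          exact mul_le_mul_of_nonneg_left h2 (by positivity)
    _ = t ^ n * dist u v := by
        rw [intervalIntegral.integral_mul_const, integral_npow n hn]

lemma Phi2_dist_le (n : ℕ) (hn : 2 ≤ n) (u v : C(Icc (0:ℝ) 1, ℝ)) :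
    dist (Phi n (Phi n u)) (Phi n (Phi n v)) ≤ (1/3) * dist u v := by
  have hD : (0:ℝ) ≤ dist u v := dist_nonneg
  rw [ContinuousMap.dist_le (by positivity)]
  rintro ⟨t, ht0, ht1⟩
  rw [Real.dist_eq]
  simp only [Phi_apply]
  rw [← intervalIntegral.integral_sub ((Fof_cont n _).intervalIntegrable _ _)
      ((Fof_cont n _).intervalIntegrable _ _)]
  calc |∫ z in (0:ℝ)..t, (Fof n (Phi n u) z - Fof n (Phi n v) z)|
      ≤ ∫ z in (0:ℝ)..t, |Fof n (Phi n u) z - Fof n (Phi n v) z| :=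
        intervalIntegral.abs_integral_le_integral_abs ht0
    _ ≤ ∫ z in (0:ℝ)..t, (n:ℝ) * z ^ (n-1) * (1 - z) * dist u v := by
        apply intervalIntegral.integral_mono_on ht0
        · exact ((Fof_cont n _).sub (Fof_cont n _)).abs.intervalIntegrable _ _
        · exact ((((continuous_const.mul (continuous_pow _)).mul
            (continuous_const.sub continuous_id)).mul continuous_const)).intervalIntegrable _ _
        · intro z hz
          have hz0 : (0:ℝ) ≤ z := hz.1
          have hz1 : z ≤ 1 := hz.2.trans ht1
          have h1z : (1 - z) ∈ Icc (0:ℝ) 1 := ⟨by linarith, by linarith⟩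
          have hdiff : Fof n (Phi n u) z - Fof n (Phi n v) z
              = (n:ℝ) * z ^ (n-1) * (extU (Phi n v) (1-z) - extU (Phi n u) (1-z)) := by
            unfold Fof; ring
          rw [hdiff, abs_mul, abs_of_nonneg (by positivity : (0:ℝ) ≤ (n:ℝ) * z ^ (n-1))]
          have he1 : extU (Phi n v) (1-z) = Phi n v ⟨1-z, h1z⟩ :=
            Set.IccExtend_of_mem zero_le_one _ h1z
          have he2 : extU (Phi n u) (1-z) = Phi n u ⟨1-z, h1z⟩ :=
            Set.IccExtend_of_mem zero_le_one _ h1z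
          have hb : |extU (Phi n v) (1-z) - extU (Phi n u) (1-z)| ≤ (1-z)^n * dist u v := by
            rw [he1, he2]
            have := Phi_dist_le n hn v u ⟨1-z, h1z⟩
            rw [dist_comm v u] at this
            exact this
          have hpow : (1-z)^n ≤ (1-z) := by
            have := pow_le_pow_of_le_one h1z.1 h1z.2 (by omega : 1 ≤ n)
            simpa using this
          calc (n:ℝ) * z ^ (n-1) * |extU (Phi n v) (1-z) - extU (Phi n u) (1-z)|
              ≤ (n:ℝ) * z ^ (n-1) * ((1-z)^n * dist u v) :=
                mul_le_mul_of_nonneg_left hb (by positivity)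
            _ ≤ (n:ℝ) * z ^ (n-1) * ((1-z) * dist u v) := by
                apply mul_le_mul_of_nonneg_left (by nlinarith) (by positivity)
            _ = (n:ℝ) * z ^ (n-1) * (1 - z) * dist u v := by ring
    _ ≤ ∫ z in (0:ℝ)..1, (n:ℝ) * z ^ (n-1) * (1 - z) * dist u v := by
        apply intervalIntegral.integral_mono_interval le_rfl ht0 ht1
        · filter_upwards [MeasureTheory.ae_restrict_mem measurableSet_Ioc] with z hz
          have h0 : (0:ℝ) ≤ z := le_of_lt hz.1
          have h1 : (0:ℝ) ≤ 1 - z := by linarith [hz.2]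
          exact mul_nonneg (mul_nonneg (mul_nonneg (Nat.cast_nonneg n)
            (pow_nonneg h0 _)) h1) dist_nonneg
        · exact ((((continuous_const.mul (continuous_pow _)).mul
            (continuous_const.sub continuous_id)).mul continuous_const)).intervalIntegrable _ _
    _ = (1/((n:ℝ)+1)) * dist u v := by
        rw [intervalIntegral.integral_mul_const, key_integral n hn]
    _ ≤ (1/3) * dist u v := by
        apply mul_le_mul_of_nonneg_right _ hD
        have h3 : (3:ℝ) ≤ (n:ℝ) + 1 := by
          have : (2:ℝ) ≤ (n:ℝ) := by exact_mod_cast hn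
          linarith
        rw [div_le_div_iff₀ (by positivity) (by norm_num)]
        linarith

lemma contracting (n : ℕ) (hn : 2 ≤ n) :
    ContractingWith (1/3 : NNReal) (fun u : C(Icc (0:ℝ) 1, ℝ) => Phi n (Phi n u)) := by
  constructor
  · rw [show (1/3 : NNReal) = ⟨1/3, by norm_num⟩ from rfl]
    exact (show (1/3 : NNReal) < 1 by norm_num)
  · apply LipschitzWith.of_dist_le_mul
    intro u v
    have h := Phi2_dist_le n hn u v
    have : ((1/3 : NNReal) : ℝ) = 1/3 := by norm_num
    rw [this]
    exact h

noncomputable def Ustar (n : ℕ) (hn : 2 ≤ n) : C(Icc (0:ℝ) 1, ℝ) :=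
  (contracting n hn).fixedPoint _

lemma Ustar_fix2 (n : ℕ) (hn : 2 ≤ n) : Phi n (Phi n (Ustar n hn)) = Ustar n hn :=
  (contracting n hn).fixedPoint_isFixedPt

lemma Ustar_fix (n : ℕ) (hn : 2 ≤ n) : Phi n (Ustar n hn) = Ustar n hn := by
  have h2 := Ustar_fix2 n hn
  have h3 : Function.IsFixedPt (fun u : C(Icc (0:ℝ) 1, ℝ) => Phi n (Phi n u))
      (Phi n (Ustar n hn)) := congrArg (Phi n) h2
  have h4 := (contracting n hn).fixedPoint_unique h3
  exact h4.trans rfl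

lemma extU_norm (u : C(Icc (0:ℝ) 1, ℝ)) (y : ℝ) : |extU u y| ≤ ‖u‖ :=
  ContinuousMap.norm_coe_le_norm u _

lemma II_of_bdd (φ : ℝ → ℝ) (hm : Measurable φ) (C : ℝ)
    (hC : ∀ x ∈ Icc (0:ℝ) 1, |φ x| ≤ C)
    {a b : ℝ} (ha : 0 ≤ a) (hab : a ≤ b) (hb : b ≤ 1) :
    IntervalIntegrable φ MeasureTheory.volume a b := by
  rw [intervalIntegrable_iff_integrableOn_Ioc_of_le hab]
  apply MeasureTheory.Integrable.mono'
    (MeasureTheory.integrableOn_const (C := C) measure_Ioc_lt_top.ne)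
    hm.aestronglyMeasurable.restrict
  filter_upwards [MeasureTheory.ae_restrict_mem measurableSet_Ioc] with x hx
  exact hC x ⟨le_trans ha (le_of_lt hx.1), hx.2.trans hb⟩

lemma uniqueness_aux (n : ℕ) (hn : 2 ≤ n) (F G : ℝ → ℝ)
    (hFm : Measurable F) (hGm : Measurable G)
    (CF : ℝ) (hCF : ∀ x ∈ Icc (0:ℝ) 1, |F x| ≤ CF)
    (CG : ℝ) (hCG : ∀ x ∈ Icc (0:ℝ) 1, |G x| ≤ CG)
    (hF : ∀ x ∈ Icc (0:ℝ) 1, F x = (n:ℝ) * x ^ (n-1) - ((n:ℝ) - 1) * x ^ n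
            - (n:ℝ) * x ^ (n-1) * ∫ z in (0:ℝ)..(1 - x), F z)
    (hG : ∀ x ∈ Icc (0:ℝ) 1, G x = (n:ℝ) * x ^ (n-1) - ((n:ℝ) - 1) * x ^ n
            - (n:ℝ) * x ^ (n-1) * ∫ z in (0:ℝ)..(1 - x), G z) :
    ∀ x ∈ Icc (0:ℝ) 1, G x = F x := by
  set H : ℝ → ℝ := fun z => G z - F z with hHdef
  have hHm : Measurable H := hGm.sub hFm
  have hHb : ∀ x ∈ Icc (0:ℝ) 1, |H x| ≤ CG + CF := by
    intro x hx
    calc |H x| ≤ |G x| + |F x| := abs_sub _ _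
      _ ≤ CG + CF := add_le_add (hCG x hx) (hCF x hx)
  have hHam : Measurable fun z => |H z| := hHm.abs
  have hHab : ∀ x ∈ Icc (0:ℝ) 1, |(fun z => |H z|) x| ≤ CG + CF := by
    intro x hx; rw [abs_abs]; exact hHb x hx
  -- the difference equation
  have hHeq : ∀ x ∈ Icc (0:ℝ) 1,
      H x = -((n:ℝ) * x ^ (n-1)) * ∫ z in (0:ℝ)..(1 - x), H z := by
    rintro x ⟨hx0, hx1⟩
    have h10 : (0:ℝ) ≤ 1 - x := by linarith
    have h11 : (1:ℝ) - x ≤ 1 := by linarith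
    have hsub : ∫ z in (0:ℝ)..(1 - x), H z
        = (∫ z in (0:ℝ)..(1 - x), G z) - ∫ z in (0:ℝ)..(1 - x), F z :=
      intervalIntegral.integral_sub
        (II_of_bdd G hGm CG hCG le_rfl h10 h11)
        (II_of_bdd F hFm CF hCF le_rfl h10 h11)
    simp only [hHdef]
    rw [hG x ⟨hx0, hx1⟩, hF x ⟨hx0, hx1⟩, hsub]
    ring
  set J : ℝ := ∫ z in (0:ℝ)..1, |H z| with hJdef
  have hJ0 : 0 ≤ J :=
    intervalIntegral.integral_nonneg (by norm_num) (fun x _ => abs_nonneg _)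
  -- step 1
  have hstep1 : ∀ z ∈ Icc (0:ℝ) 1, |H z| ≤ (n:ℝ) * z ^ (n-1) * J := by
    rintro z ⟨hz0, hz1⟩
    have h10 : (0:ℝ) ≤ 1 - z := by linarith
    have h11 : (1:ℝ) - z ≤ 1 := by linarith
    rw [hHeq z ⟨hz0, hz1⟩, abs_mul, abs_neg,
      abs_of_nonneg (by positivity : (0:ℝ) ≤ (n:ℝ) * z ^ (n-1))]
    apply mul_le_mul_of_nonneg_left _ (by positivity)
    calc |∫ w in (0:ℝ)..(1-z), H w| ≤ ∫ w in (0:ℝ)..(1-z), |H w| :=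
          intervalIntegral.abs_integral_le_integral_abs h10
      _ ≤ J := by
          apply intervalIntegral.integral_mono_interval le_rfl h10 h11
          · filter_upwards with w; exact abs_nonneg _
          · exact II_of_bdd _ hHam (CG + CF) hHab le_rfl zero_le_one le_rfl
  -- step 2
  have hstep2 : ∀ x ∈ Icc (0:ℝ) 1, |H x| ≤ (n:ℝ) * x ^ (n-1) * (1 - x) * J := by
    rintro x ⟨hx0, hx1⟩
    have h10 : (0:ℝ) ≤ 1 - x := by linarith
    have h11 : (1:ℝ) - x ≤ 1 := by linarith
    rw [hHeq x ⟨hx0, hx1⟩, abs_mul, abs_neg,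
      abs_of_nonneg (by positivity : (0:ℝ) ≤ (n:ℝ) * x ^ (n-1))]
    have hinner : |∫ w in (0:ℝ)..(1-x), H w| ≤ (1-x)^n * J := by
      calc |∫ w in (0:ℝ)..(1-x), H w| ≤ ∫ w in (0:ℝ)..(1-x), |H w| :=
            intervalIntegral.abs_integral_le_integral_abs h10
        _ ≤ ∫ w in (0:ℝ)..(1-x), (n:ℝ) * w ^ (n-1) * J := by
            apply intervalIntegral.integral_mono_on h10
            · exact II_of_bdd _ hHam (CG + CF) hHab le_rfl h10 h11
            · exact ((continuous_const.mul (continuous_pow _)).mul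
                continuous_const).intervalIntegrable _ _
            · intro w hw
              exact hstep1 w ⟨hw.1, hw.2.trans h11⟩
        _ = (1-x)^n * J := by
            rw [intervalIntegral.integral_mul_const, integral_npow n hn]
    have hpow : (1-x)^n ≤ 1 - x := by
      have := pow_le_pow_of_le_one h10 (by linarith) (by omega : 1 ≤ n)
      simpa using this
    calc (n:ℝ) * x ^ (n-1) * |∫ w in (0:ℝ)..(1-x), H w|
        ≤ (n:ℝ) * x ^ (n-1) * ((1-x)^n * J) :=
          mul_le_mul_of_nonneg_left hinner (by positivity)
      _ ≤ (n:ℝ) * x ^ (n-1) * ((1-x) * J) :=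
          mul_le_mul_of_nonneg_left (by nlinarith) (by positivity)
      _ = (n:ℝ) * x ^ (n-1) * (1 - x) * J := by ring
  -- step 3 : J ≤ J/(n+1)
  have hstep3 : J ≤ (1/((n:ℝ)+1)) * J := by
    have hmono : J ≤ ∫ x in (0:ℝ)..1, (n:ℝ) * x ^ (n-1) * (1 - x) * J := by
      rw [hJdef]
      apply intervalIntegral.integral_mono_on zero_le_one
      · exact II_of_bdd _ hHam (CG + CF) hHab le_rfl zero_le_one le_rfl
      · exact (((continuous_const.mul (continuous_pow _)).mul
          (continuous_const.sub continuous_id)).mul continuous_const).intervalIntegrable _ _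
      · exact hstep2
    calc J ≤ ∫ x in (0:ℝ)..1, (n:ℝ) * x ^ (n-1) * (1 - x) * J := hmono
      _ = (1/((n:ℝ)+1)) * J := by
          rw [intervalIntegral.integral_mul_const, key_integral n hn]
  have hJzero : J = 0 := by
    have h3 : (3:ℝ) ≤ (n:ℝ) + 1 := by
      have : (2:ℝ) ≤ (n:ℝ) := by exact_mod_cast hn
      linarith
    have h4 : (1/((n:ℝ)+1)) * J ≤ (1/3) * J := by
      apply mul_le_mul_of_nonneg_right _ hJ0
      rw [div_le_div_iff₀ (by linarith) (by norm_num)]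
      linarith
    linarith
  intro x hx
  have h := hstep2 x hx
  rw [hJzero, mul_zero] at h
  have : H x = 0 := abs_eq_zero.1 (le_antisymm h (abs_nonneg _))
  have : G x - F x = 0 := this
  linarith

theorem stmt_1 (n : ℕ) (hn : 2 ≤ n) :
    ∃ F : ℝ → ℝ,
      (Measurable F ∧ (∃ C : ℝ, ∀ x ∈ Icc (0:ℝ) 1, |F x| ≤ C) ∧
        ∀ x ∈ Icc (0:ℝ) 1,
          F x = (n:ℝ) * x ^ (n-1) - ((n:ℝ) - 1) * x ^ n
            - (n:ℝ) * x ^ (n-1) * ∫ z in (0:ℝ)..(1 - x), F z) ∧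
      ∀ G : ℝ → ℝ,
        (Measurable G ∧ (∃ C : ℝ, ∀ x ∈ Icc (0:ℝ) 1, |G x| ≤ C) ∧
          ∀ x ∈ Icc (0:ℝ) 1,
            G x = (n:ℝ) * x ^ (n-1) - ((n:ℝ) - 1) * x ^ n
              - (n:ℝ) * x ^ (n-1) * ∫ z in (0:ℝ)..(1 - x), G z) →
        ∀ x ∈ Icc (0:ℝ) 1, G x = F x := by
  set U : C(Icc (0:ℝ) 1, ℝ) := Ustar n hn with hU
  set F : ℝ → ℝ := Fof n U with hFdef
  have hFm : Measurable F := (Fof_cont n U).measurable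
  have hFb : ∀ x ∈ Icc (0:ℝ) 1, |F x| ≤ 2*(n:ℝ) + (n:ℝ) * ‖U‖ := by
    rintro x ⟨hx0, hx1⟩
    have hxp : ∀ k : ℕ, x ^ k ≤ 1 := fun k => pow_le_one₀ hx0 hx1
    have hn1 : (1:ℝ) ≤ (n:ℝ) := by exact_mod_cast (by omega : 1 ≤ n)
    calc |F x| ≤ |(n:ℝ) * x ^ (n-1)| + |((n:ℝ) - 1) * x ^ n|
          + |(n:ℝ) * x ^ (n-1) * extU U (1 - x)| := by
          simp only [hFdef, Fof]
          exact (abs_sub _ _).trans (add_le_add (abs_sub _ _) le_rfl)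
      _ ≤ 2*(n:ℝ) + (n:ℝ) * ‖U‖ := by
          have h1 : |(n:ℝ) * x ^ (n-1)| ≤ (n:ℝ) := by
            rw [abs_mul, abs_of_nonneg (by positivity : (0:ℝ) ≤ (n:ℝ)),
              abs_of_nonneg (by positivity : (0:ℝ) ≤ x ^ (n-1))]
            nlinarith [hxp (n-1)]
          have h2 : |((n:ℝ) - 1) * x ^ n| ≤ (n:ℝ) := by
            rw [abs_mul, abs_of_nonneg (by linarith : (0:ℝ) ≤ (n:ℝ) - 1),
              abs_of_nonneg (by positivity : (0:ℝ) ≤ x ^ n)]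
            nlinarith [hxp n]
          have h3 : |(n:ℝ) * x ^ (n-1) * extU U (1 - x)| ≤ (n:ℝ) * ‖U‖ := by
            rw [abs_mul]
            have := extU_norm U (1 - x)
            have hnn : (0:ℝ) ≤ ‖U‖ := norm_nonneg _
            calc |(n:ℝ) * x ^ (n-1)| * |extU U (1 - x)|
                ≤ (n:ℝ) * |extU U (1 - x)| := mul_le_mul_of_nonneg_right h1 (abs_nonneg _)
              _ ≤ (n:ℝ) * ‖U‖ := mul_le_mul_of_nonneg_left this (by positivity)
          linarith
  have hFeq : ∀ x ∈ Icc (0:ℝ) 1,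
      F x = (n:ℝ) * x ^ (n-1) - ((n:ℝ) - 1) * x ^ n
        - (n:ℝ) * x ^ (n-1) * ∫ z in (0:ℝ)..(1 - x), F z := by
    rintro x ⟨hx0, hx1⟩
    have h1x : (1 - x) ∈ Icc (0:ℝ) 1 := ⟨by linarith, by linarith⟩
    have hext : extU U (1 - x) = ∫ z in (0:ℝ)..(1 - x), F z := by
      unfold extU
      rw [Set.IccExtend_of_mem zero_le_one _ h1x]
      have := congrArg (fun v : C(Icc (0:ℝ) 1, ℝ) => v ⟨1 - x, h1x⟩) (Ustar_fix n hn)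
      rw [← hU] at this
      rw [← this, Phi_apply]
    simp only [hFdef]
    conv_lhs => rw [Fof]
    rw [hext]
  refine ⟨F, ⟨hFm, ⟨2*(n:ℝ) + (n:ℝ) * ‖U‖, hFb⟩, hFeq⟩, ?_⟩
  rintro G ⟨hGm, ⟨CG, hGb⟩, hGeq⟩
  exact uniqueness_aux n hn F G hFm hGm (2*(n:ℝ) + (n:ℝ) * ‖U‖) hFb CG hGb hFeq hGeq
end

section
/- Let n ≥ 2 be an integer, let f : [0,1] → ℝ be a nonnegative integrable function with ∫₀¹ f(z) dz = 1, and let F(t) = ∫₀^t f(z) dz. Then for every x ∈ [0,1]: ∫₀¹ ( ∫₀^x min((x − y + z)/(1 − y), 1) · n(n−1)(1−y)·y^(n−2) dy ) f(z) dz = n·x^(n-1) − (n−1)·x^n − n·x^(n-1)·∫₀^(1−x) F(z) dz. -/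
open Set

section Aux
open MeasureTheory

lemma fubiniA (f : ℝ → ℝ) (hfi : MeasureTheory.IntegrableOn f (Icc (0:ℝ) 1))
    (a : ℝ) (ha0 : 0 ≤ a) (ha1 : a ≤ 1) :
    (∫ z in (0:ℝ)..a, (∫ u in (0:ℝ)..z, f u)) = ∫ u in (0:ℝ)..a, (a - u) * f u := by
  have hfa : IntegrableOn f (Ioc (0:ℝ) a) :=
    hfi.mono_set (Ioc_subset_Icc_self.trans (Icc_subset_Icc le_rfl ha1))
  set μ := volume.restrict (Ioc (0:ℝ) a) with hμ
  set k : ℝ × ℝ → ℝ := fun p => if p.2 ≤ p.1 then f p.2 else 0 with hk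
  have hf2 : Integrable (fun p : ℝ × ℝ => f p.2) (μ.prod μ) := by
    have := (integrable_const (1:ℝ) (μ := μ)).mul_prod (hfa : Integrable f μ)
    simpa using this
  have hkm : AEStronglyMeasurable k (μ.prod μ) := by
    have : k = Set.indicator {p : ℝ × ℝ | p.2 ≤ p.1} (fun p => f p.2) := by
      ext p; by_cases h : p.2 ≤ p.1 <;> simp [hk, h, Set.indicator]
    rw [this]
    exact hf2.1.indicator (measurableSet_le measurable_snd measurable_fst)
  have hki : Integrable k (μ.prod μ) := by
    refine hf2.norm.mono' hkm (Filter.Eventually.of_forall fun p => ?_)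
    by_cases h : p.2 ≤ p.1 <;> simp [hk, h, abs_nonneg]
  rw [intervalIntegral.integral_of_le ha0, intervalIntegral.integral_of_le ha0]
  calc ∫ z in Ioc (0:ℝ) a, (∫ u in (0:ℝ)..z, f u)
      = ∫ z in Ioc (0:ℝ) a, ∫ u in Ioc (0:ℝ) a, k (z, u) := by
        refine setIntegral_congr_fun measurableSet_Ioc fun z hz => ?_
        rw [intervalIntegral.integral_of_le hz.1.le]
        have h1 : ∫ u in Ioc (0:ℝ) a, k (z, u) = ∫ u in Ioc (0:ℝ) a, (Ioc (0:ℝ) z).indicator f u := by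
          refine setIntegral_congr_fun measurableSet_Ioc fun u hu => ?_
          by_cases h : u ≤ z <;> simp [hk, h, Set.indicator, hu.1]
        rw [h1, setIntegral_indicator measurableSet_Ioc,
          Set.inter_eq_right.mpr (Ioc_subset_Ioc le_rfl hz.2)]
    _ = ∫ u in Ioc (0:ℝ) a, ∫ z in Ioc (0:ℝ) a, k (z, u) := by
        exact integral_integral_swap (f := fun z u => k (z, u)) hki
    _ = ∫ u in Ioc (0:ℝ) a, (a - u) * f u := by
        refine setIntegral_congr_fun measurableSet_Ioc fun u hu => ?_
        have h1 : ∀ z, k (z, u) = (Ici u).indicator (fun _ => f u) z := by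
          intro z; by_cases h : u ≤ z <;> simp [hk, h, Set.indicator]
        simp_rw [h1]
        rw [setIntegral_indicator measurableSet_Ici]
        have h2 : Ioc (0:ℝ) a ∩ Ici u = Icc u a := by
          ext z; constructor
          · rintro ⟨⟨_, hza⟩, hz⟩; exact ⟨hz, hza⟩
          · rintro ⟨h1', h2'⟩; exact ⟨⟨lt_of_lt_of_le hu.1 h1', h2'⟩, h1'⟩
        rw [h2, setIntegral_const, measureReal_def, Real.volume_Icc, smul_eq_mul,
          ENNReal.toReal_ofReal (by linarith [hu.2] : (0:ℝ) ≤ a - u)]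


lemma inner_eval (n : ℕ) (hn : 2 ≤ n) (x z : ℝ) (hx0 : 0 ≤ x) (hx1 : x ≤ 1) :
    (∫ y in (0:ℝ)..x,
        (if y = 1 then 1 else min ((x - y + z) / (1 - y)) 1)
          * ((n:ℝ) * ((n:ℝ) - 1) * (1 - y) * y ^ (n-2)))
    = if x + z ≤ 1 then x ^ n + (n:ℝ) * z * x ^ (n-1)
      else (n:ℝ) * x ^ (n-1) - ((n:ℝ) - 1) * x ^ n := by
  have hne : ∀ᵐ y : ℝ, y ≠ 1 := by
    have : (volume ({1} : Set ℝ)) = 0 := Real.volume_singleton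
    filter_upwards [measure_eq_zero_iff_ae_notMem.mp this] with y hy
    simpa using hy
  have hn1 : (n:ℝ) - 1 ≠ 0 := by
    have : (2:ℝ) ≤ (n:ℝ) := by exact_mod_cast hn
    linarith
  have hn0 : (n:ℝ) ≠ 0 := by
    have : (2:ℝ) ≤ (n:ℝ) := by exact_mod_cast hn
    linarith
  have e21 : n - 2 + 1 = n - 1 := by omega
  have e10 : n - 1 + 1 = n := by omega
  have c2 : ((n - 2 : ℕ) : ℝ) = (n:ℝ) - 2 := by
    push_cast [Nat.cast_sub (by omega : 2 ≤ n)]; ring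
  have c1 : ((n - 1 : ℕ) : ℝ) = (n:ℝ) - 1 := by
    push_cast [Nat.cast_sub (by omega : 1 ≤ n)]; ring
  have hxx : x * x ^ (n-1) = x ^ n := by
    rw [mul_comm, ← pow_succ, e10]
  have hipow : ∀ m : ℕ, IntervalIntegrable (fun y : ℝ => y ^ m) volume 0 x :=
    fun m => (continuous_pow m).intervalIntegrable 0 x
  by_cases h : x + z ≤ 1
  · rw [if_pos h]
    have key : (∫ y in (0:ℝ)..x,
        (if y = 1 then 1 else min ((x - y + z) / (1 - y)) 1)
          * ((n:ℝ) * ((n:ℝ) - 1) * (1 - y) * y ^ (n-2)))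
        = ∫ y in (0:ℝ)..x,
          (((n:ℝ) * ((n:ℝ) - 1) * (x + z)) * y ^ (n-2) - ((n:ℝ) * ((n:ℝ) - 1)) * y ^ (n-1)) := by
      refine intervalIntegral.integral_congr_ae ?_
      filter_upwards [hne] with y hy hyI
      rw [Set.uIoc_of_le hx0] at hyI
      have hylt : y < 1 := lt_of_le_of_ne (le_trans hyI.2 hx1) hy
      have h1y : (0:ℝ) < 1 - y := by linarith
      rw [if_neg hy, min_eq_left (by rw [div_le_one h1y]; linarith)]
      have h1y' : (1:ℝ) - y ≠ 0 := ne_of_gt h1y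
      field_simp
      rw [← e21, pow_succ]
      ring
    rw [key, intervalIntegral.integral_sub ((hipow _).const_mul _) ((hipow _).const_mul _),
      intervalIntegral.integral_const_mul, intervalIntegral.integral_const_mul,
      integral_pow, integral_pow]
    rw [e21, e10]
    rw [zero_pow (by omega : n - 1 ≠ 0), zero_pow (by omega : n ≠ 0)]
    rw [c2, c1, sub_zero, sub_zero,
      show (n:ℝ) - 2 + 1 = (n:ℝ) - 1 by ring, show (n:ℝ) - 1 + 1 = (n:ℝ) by ring]
    have d1 : (n:ℝ) * ((n:ℝ) - 1) * (x + z) * (x ^ (n-1) / ((n:ℝ) - 1))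
        = (n:ℝ) * (x + z) * x ^ (n-1) := by field_simp
    have d2 : (n:ℝ) * ((n:ℝ) - 1) * (x ^ n / (n:ℝ)) = ((n:ℝ) - 1) * x ^ n := by
      field_simp
    rw [d1, d2]
    linear_combination (n:ℝ) * hxx
  · rw [if_neg h]
    have key : (∫ y in (0:ℝ)..x,
        (if y = 1 then 1 else min ((x - y + z) / (1 - y)) 1)
          * ((n:ℝ) * ((n:ℝ) - 1) * (1 - y) * y ^ (n-2)))
        = ∫ y in (0:ℝ)..x,
          ((n:ℝ) * ((n:ℝ) - 1) * y ^ (n-2) - (n:ℝ) * ((n:ℝ) - 1) * y ^ (n-1)) := by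
      refine intervalIntegral.integral_congr_ae ?_
      filter_upwards [hne] with y hy hyI
      rw [Set.uIoc_of_le hx0] at hyI
      have hylt : y < 1 := lt_of_le_of_ne (le_trans hyI.2 hx1) hy
      have h1y : (0:ℝ) < 1 - y := by linarith
      rw [if_neg hy, min_eq_right ((le_div_iff₀ h1y).2 (by linarith))]
      rw [← e21, pow_succ]
      ring
    rw [key, intervalIntegral.integral_sub ((hipow _).const_mul _) ((hipow _).const_mul _),
      intervalIntegral.integral_const_mul, intervalIntegral.integral_const_mul,
      integral_pow, integral_pow]
    rw [e21, e10]
    rw [zero_pow (by omega : n - 1 ≠ 0), zero_pow (by omega : n ≠ 0)]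
    rw [c2, c1, sub_zero, sub_zero,
      show (n:ℝ) - 2 + 1 = (n:ℝ) - 1 by ring, show (n:ℝ) - 1 + 1 = (n:ℝ) by ring]
    have d1 : (n:ℝ) * ((n:ℝ) - 1) * (x ^ (n-1) / ((n:ℝ) - 1)) = (n:ℝ) * x ^ (n-1) := by
      field_simp
    have d2 : (n:ℝ) * ((n:ℝ) - 1) * (x ^ n / (n:ℝ)) = ((n:ℝ) - 1) * x ^ n := by
      field_simp
    rw [d1, d2]

end Aux

open MeasureTheory in
theorem stmt_4 (n : ℕ) (hn : 2 ≤ n) (f : ℝ → ℝ)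
    (hf0 : ∀ z ∈ Icc (0:ℝ) 1, 0 ≤ f z)
    (hfi : MeasureTheory.IntegrableOn f (Icc (0:ℝ) 1))
    (hf1 : (∫ z in (0:ℝ)..1, f z) = 1)
    (F : ℝ → ℝ) (hF : ∀ t, F t = ∫ z in (0:ℝ)..t, f z)
    (x : ℝ) (hx : x ∈ Icc (0:ℝ) 1) :
    (∫ z in (0:ℝ)..1,
        (∫ y in (0:ℝ)..x,
          (if y = 1 then 1 else min ((x - y + z) / (1 - y)) 1)
            * ((n:ℝ) * ((n:ℝ) - 1) * (1 - y) * y ^ (n-2))) * f z)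
      = (n:ℝ) * x ^ (n-1) - ((n:ℝ) - 1) * x ^ n
        - (n:ℝ) * x ^ (n-1) * ∫ z in (0:ℝ)..(1 - x), F z := by
  obtain ⟨hx0, hx1⟩ := hx
  set a : ℝ := 1 - x with ha
  have ha0 : 0 ≤ a := by simp [ha]; linarith
  have ha1 : a ≤ 1 := by simp [ha]; linarith
  set G : ℝ := (n:ℝ) * x ^ (n-1) - ((n:ℝ) - 1) * x ^ n with hG
  have hxx : x * x ^ (n-1) = x ^ n := by
    rw [mul_comm, ← pow_succ, show n - 1 + 1 = n by omega]
  -- interval integrability of f on subintervals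
  have hf01 : IntervalIntegrable f volume 0 1 :=
    (intervalIntegrable_iff_integrableOn_Icc_of_le (by norm_num)).2 hfi
  have hf0a : IntervalIntegrable f volume 0 a := by
    refine hf01.mono_set ?_
    rw [uIcc_of_le ha0, uIcc_of_le (by norm_num : (0:ℝ) ≤ 1)]
    exact Icc_subset_Icc le_rfl ha1
  have hfa1 : IntervalIntegrable f volume a 1 := by
    refine hf01.mono_set ?_
    rw [uIcc_of_le ha1, uIcc_of_le (by norm_num : (0:ℝ) ≤ 1)]
    exact Icc_subset_Icc ha0 le_rfl
  -- step 1 : rewrite the inner integral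
  set h : ℝ → ℝ := fun z => if x + z ≤ 1 then x ^ n + (n:ℝ) * z * x ^ (n-1) else G with hh
  have step1 : (∫ z in (0:ℝ)..1,
        (∫ y in (0:ℝ)..x,
          (if y = 1 then 1 else min ((x - y + z) / (1 - y)) 1)
            * ((n:ℝ) * ((n:ℝ) - 1) * (1 - y) * y ^ (n-2))) * f z)
      = ∫ z in (0:ℝ)..1, h z * f z :=
    intervalIntegral.integral_congr fun z _ => by rw [inner_eval n hn x z hx0 hx1]
  -- integrability of pieces
  have hid : IntervalIntegrable (fun z : ℝ => z * f z) volume 0 a :=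
    hf0a.continuousOn_mul continuous_id.continuousOn
  have hP : IntervalIntegrable (fun z => (x ^ n + (n:ℝ) * z * x ^ (n-1)) * f z) volume 0 a :=
    hf0a.continuousOn_mul (by fun_prop)
  have hH0a : IntervalIntegrable (fun z => h z * f z) volume 0 a := by
    rw [intervalIntegrable_iff_integrableOn_Ioc_of_le ha0]
    refine (((intervalIntegrable_iff_integrableOn_Ioc_of_le ha0).1 hP).congr_fun ?_
      measurableSet_Ioc)
    intro z hz
    simp only [hh]
    rw [if_pos (by simp [ha] at hz ⊢; linarith [hz.2])]
  have hHa1 : IntervalIntegrable (fun z => h z * f z) volume a 1 := by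
    rw [intervalIntegrable_iff_integrableOn_Ioc_of_le ha1]
    refine (((intervalIntegrable_iff_integrableOn_Ioc_of_le ha1).1
      (hfa1.const_mul G)).congr_fun ?_ measurableSet_Ioc)
    intro z hz
    simp only [hh]
    rw [if_neg (by simp [ha] at hz ⊢; linarith [hz.1])]
  -- split the integral
  have split : (∫ z in (0:ℝ)..a, h z * f z) + (∫ z in a..1, h z * f z)
      = ∫ z in (0:ℝ)..1, h z * f z :=
    intervalIntegral.integral_add_adjacent_intervals hH0a hHa1
  have splitf : (∫ z in (0:ℝ)..a, f z) + (∫ z in a..1, f z) = 1 := by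
    rw [intervalIntegral.integral_add_adjacent_intervals hf0a hfa1, hf1]
  -- evaluate the left piece
  have left1 : (∫ z in (0:ℝ)..a, h z * f z)
      = ∫ z in (0:ℝ)..a, (x ^ n * f z + ((n:ℝ) * x ^ (n-1)) * (z * f z)) := by
    refine intervalIntegral.integral_congr fun z hz => ?_
    rw [uIcc_of_le ha0] at hz
    simp only [hh]
    rw [if_pos (by linarith [hz.2])]
    ring
  have left2 : (∫ z in (0:ℝ)..a, (x ^ n * f z + ((n:ℝ) * x ^ (n-1)) * (z * f z)))
      = x ^ n * (∫ z in (0:ℝ)..a, f z)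
        + ((n:ℝ) * x ^ (n-1)) * ∫ z in (0:ℝ)..a, z * f z := by
    rw [intervalIntegral.integral_add (hf0a.const_mul _) (hid.const_mul _),
      intervalIntegral.integral_const_mul, intervalIntegral.integral_const_mul]
  -- evaluate the right piece
  have right1 : (∫ z in a..1, h z * f z) = G * ∫ z in a..1, f z := by
    rw [← intervalIntegral.integral_const_mul]
    refine intervalIntegral.integral_congr fun z hz => ?_
    rw [uIcc_of_le ha1] at hz
    simp only [hh]
    by_cases hc : x + z ≤ 1
    · have hza : z = a := le_antisymm (by linarith) hz.1
      rw [if_pos hc, hza]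
      simp only [ha, hG]
      linear_combination (-(n:ℝ) * f (1 - x)) * hxx
    · rw [if_neg hc]
  -- evaluate ∫ z f z via Fubini
  have hFa : F a = ∫ z in (0:ℝ)..a, f z := hF a
  have fub1 : (∫ z in (0:ℝ)..a, F z) = ∫ u in (0:ℝ)..a, (a - u) * f u := by
    have fubA := fubiniA f hfi a ha0 ha1
    rw [← fubA]
    exact intervalIntegral.integral_congr fun z _ => (hF z)
  have fub2 : (∫ u in (0:ℝ)..a, (a - u) * f u)
      = a * (∫ z in (0:ℝ)..a, f z) - ∫ z in (0:ℝ)..a, z * f z := by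
    rw [← intervalIntegral.integral_const_mul, ← intervalIntegral.integral_sub
      (hf0a.const_mul _) hid]
    exact intervalIntegral.integral_congr fun z _ => by ring
  -- put everything together
  rw [step1, ← split, left1, left2, right1]
  have hIF : (∫ z in (0:ℝ)..a, z * f z)
      = a * (∫ z in (0:ℝ)..a, f z) - ∫ z in (0:ℝ)..a, F z := by
    linarith [fub1, fub2]
  rw [hIF]
  have hfa1' : (∫ z in a..1, f z) = 1 - ∫ z in (0:ℝ)..a, f z := by linarith [splitf]
  rw [hfa1']
  simp only [hG, ha]
  set Fa := ∫ z in (0:ℝ)..(1-x), f z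
  set IF := ∫ z in (0:ℝ)..(1-x), F z
  linear_combination (-(n:ℝ) * Fa) * hxx
end

section
/- Let n ≥ 2 be an integer, let f : [0,1] → ℝ be a nonnegative integrable function with ∫₀¹ f(z) dz = 1, and let F(t) = ∫₀^t f(z) dz. Then for every x ∈ [0,1]: ∫₀¹ ( ∫₀^x min(2(x − y + z)/(1 − y), 1) · n(n−1)(1−y)·y^(n−2) dy ) f(z) dz = n·x^(n-1) − (n−1)·x^n − 2n(n−1)·∫_{max(2x−1, 0)}^{x} y^(n−2) · ( ∫₀^{(1+y)/2 − x} F(z) dz ) dy. -/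
open Set MeasureTheory

lemma aux_fin (a b : ℝ) : IsFiniteMeasure (volume.restrict (Ioc a b)) :=
  ⟨by rw [Measure.restrict_apply_univ]; exact measure_Ioc_lt_top⟩

lemma aux_int_fst {f : ℝ → ℝ} {μ ν : Measure ℝ} [SFinite μ] [SFinite ν] [IsFiniteMeasure ν]
    (hf : Integrable f μ) :
    Integrable (fun p : ℝ × ℝ => f p.1) (μ.prod ν) := by
  refine (integrable_prod_iff hf.1.comp_fst).mpr ⟨?_, ?_⟩
  · exact Filter.Eventually.of_forall fun z => integrable_const (f z)
  · simpa [integral_const, smul_eq_mul] using (hf.norm.const_mul (ν.real Set.univ))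

lemma aux_bdd_mul_on {s : Set ℝ} (hs : MeasurableSet s) {φ f : ℝ → ℝ}
    (hf : IntegrableOn f s) (hφ : AEStronglyMeasurable φ (volume.restrict s))
    {C : ℝ} (hC : ∀ z ∈ s, |φ z| ≤ C) :
    IntegrableOn (fun z => φ z * f z) s := by
  refine Integrable.mono' (hf.norm.const_mul C) (hφ.mul hf.1) ?_
  filter_upwards [ae_restrict_mem hs] with z hz
  simpa [abs_mul] using mul_le_mul_of_nonneg_right (hC z hz) (abs_nonneg (f z))

lemma aux_prod_integrable {f : ℝ → ℝ} {a b c d : ℝ}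
    (hf : IntegrableOn f (Ioc a b)) (φ : ℝ × ℝ → ℝ)
    (hφ : AEStronglyMeasurable φ ((volume.restrict (Ioc a b)).prod (volume.restrict (Ioc c d))))
    {C : ℝ} (hC : ∀ p ∈ (Ioc a b) ×ˢ (Ioc c d), |φ p| ≤ C) :
    Integrable (fun p : ℝ × ℝ => φ p * f p.1)
      ((volume.restrict (Ioc a b)).prod (volume.restrict (Ioc c d))) := by
  haveI := aux_fin c d
  have hf1 : Integrable (fun p : ℝ × ℝ => f p.1)
      ((volume.restrict (Ioc a b)).prod (volume.restrict (Ioc c d))) := aux_int_fst hf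
  refine Integrable.mono' (hf1.norm.const_mul C) (hφ.mul hf1.1) ?_
  rw [Measure.prod_restrict]
  filter_upwards [ae_restrict_mem ((measurableSet_Ioc).prod (measurableSet_Ioc))] with p hp
  simpa [abs_mul] using mul_le_mul_of_nonneg_right (hC p hp) (abs_nonneg (f p.1))

lemma aux_max2 (a : ℝ) : max (2*a) 0 = 2 * max a 0 := by
  rcases le_total a 0 with h|h
  · rw [max_eq_right (by linarith), max_eq_right h, mul_zero]
  · rw [max_eq_left (by linarith), max_eq_left h]

lemma aux_F {f F : ℝ → ℝ} (hfi : IntegrableOn f (Icc (0:ℝ) 1))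
    (hF : ∀ t, F t = ∫ z in (0:ℝ)..t, f z) {t : ℝ} (h0 : 0 ≤ t) (h1 : t ≤ 1) :
    ∫ z in Ioc (0:ℝ) 1, max (t - z) 0 * f z = ∫ z in (0:ℝ)..t, F z := by
  haveI := aux_fin (0:ℝ) t
  have hsub : Ioc (0:ℝ) t ⊆ Icc 0 1 := fun z hz => ⟨hz.1.le, hz.2.trans h1⟩
  have hft : IntegrableOn f (Ioc (0:ℝ) t) := hfi.mono_set hsub
  have hcont : Continuous fun z : ℝ => max (t - z) 0 :=
    (continuous_const.sub continuous_id).max continuous_const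
  have hun : Ioc (0:ℝ) 1 = Ioc 0 t ∪ Ioc t 1 := (Ioc_union_Ioc_eq_Ioc h0 h1).symm
  have hint1 : IntegrableOn (fun z => max (t - z) 0 * f z) (Ioc (0:ℝ) t) :=
    aux_bdd_mul_on measurableSet_Ioc hft hcont.aestronglyMeasurable
      (C := 1) (fun z hz => by
        rw [abs_of_nonneg (le_max_right _ _), max_le_iff]
        constructor <;> [linarith [hz.1]; norm_num])
  have hint2 : IntegrableOn (fun z => max (t - z) 0 * f z) (Ioc t 1) :=
    aux_bdd_mul_on measurableSet_Ioc (hfi.mono_set fun z hz => ⟨h0.trans hz.1.le, hz.2⟩)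
      hcont.aestronglyMeasurable (C := 1) (fun z hz => by
        rw [abs_of_nonneg (le_max_right _ _), max_le_iff]
        constructor <;> [linarith [hz.1]; norm_num])
  rw [hun, setIntegral_union (Ioc_disjoint_Ioc_of_le le_rfl) measurableSet_Ioc hint1 hint2]
  have h2 : ∫ z in Ioc t 1, max (t - z) 0 * f z = 0 := by
    rw [setIntegral_congr_fun measurableSet_Ioc
      (fun z hz => by rw [max_eq_right (by linarith [hz.1]), zero_mul]), integral_zero]
  rw [h2, add_zero]
  set ψ : ℝ × ℝ → ℝ := fun q => if q.1 ≤ q.2 then f q.1 else 0 with hψ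
  have hψm : AEStronglyMeasurable ψ
      ((volume.restrict (Ioc (0:ℝ) t)).prod (volume.restrict (Ioc (0:ℝ) t))) := by
    have : ψ = {q : ℝ × ℝ | q.1 ≤ q.2}.indicator (fun q => f q.1) := by
      funext q; simp [hψ, Set.indicator_apply, Set.mem_setOf_eq]
    rw [this]
    exact (hft.1.comp_fst).indicator (measurableSet_le measurable_fst measurable_snd)
  have hψi : Integrable ψ
      ((volume.restrict (Ioc (0:ℝ) t)).prod (volume.restrict (Ioc (0:ℝ) t))) := by
    refine Integrable.mono' (aux_int_fst hft).norm hψm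
      (Filter.Eventually.of_forall fun q => ?_)
    by_cases h : q.1 ≤ q.2 <;> simp [hψ, h]
  have hswap := integral_integral_swap (f := fun z s => ψ (z, s))
    (μ := volume.restrict (Ioc (0:ℝ) t)) (ν := volume.restrict (Ioc (0:ℝ) t)) hψi
  have hL : ∫ z in Ioc (0:ℝ) t, (∫ s in Ioc (0:ℝ) t, ψ (z, s))
      = ∫ z in Ioc (0:ℝ) t, max (t - z) 0 * f z := by
    refine setIntegral_congr_fun measurableSet_Ioc (fun z hz => ?_)
    have : (fun s => ψ (z, s)) = (Ici z).indicator (fun _ => f z) := by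
      funext s; simp [hψ, Set.indicator_apply, Set.mem_Ici]
    rw [this, setIntegral_indicator measurableSet_Ici]
    have hset : Ioc (0:ℝ) t ∩ Ici z = Icc z t := by
      ext s
      simp only [mem_inter_iff, mem_Ioc, mem_Ici, mem_Icc]
      constructor
      · rintro ⟨⟨_, h2'⟩, h3⟩; exact ⟨h3, h2'⟩
      · rintro ⟨h1', h2'⟩; exact ⟨⟨lt_of_lt_of_le hz.1 h1', h2'⟩, h1'⟩
    rw [hset, setIntegral_const, max_eq_left (by linarith [hz.2]), Real.volume_real_Icc_of_le (by linarith [hz.2]), smul_eq_mul]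
  have hR : ∫ s in Ioc (0:ℝ) t, (∫ z in Ioc (0:ℝ) t, ψ (z, s))
      = ∫ s in Ioc (0:ℝ) t, F s := by
    refine setIntegral_congr_fun measurableSet_Ioc (fun s hs => ?_)
    have : (fun z => ψ (z, s)) = (Iic s).indicator f := by
      funext z; simp [hψ, Set.indicator_apply, Set.mem_Iic]
    rw [this, setIntegral_indicator measurableSet_Iic]
    have hset : Ioc (0:ℝ) t ∩ Iic s = Ioc 0 s := by
      rw [Ioc_inter_Iic, min_eq_right hs.2]
    rw [hset, hF s, intervalIntegral.integral_of_le hs.1.le]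
  rw [← hL, hswap, hR, intervalIntegral.integral_of_le h0]

lemma aux_key {x y z : ℝ} (hy0 : 0 ≤ y) (hyx : y ≤ x) (hx1 : x ≤ 1) (hz : 0 ≤ z) :
    (if y = 1 then 1 else min (2*(x-y+z)/(1-y)) 1) * (1-y)
      = (1-y) - max (1+y-2*x-2*z) 0 := by
  by_cases hy1 : y = 1
  · subst hy1
    have hx : x = 1 := le_antisymm hx1 hyx
    subst hx
    rw [if_pos rfl, max_eq_right (by linarith)]
    ring
  · have hlt : y < 1 := lt_of_le_of_ne (hyx.trans hx1) hy1
    have hc : (0:ℝ) < 1 - y := by linarith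
    rw [if_neg hy1]
    rcases le_total (2*(x-y+z)) (1-y) with h|h
    · rw [min_eq_left (by rw [div_le_one hc]; exact h),
        div_mul_cancel₀ _ (ne_of_gt hc), max_eq_left (by linarith)]
      ring
    · rw [min_eq_right (by rw [le_div_iff₀ hc]; linarith), max_eq_right (by linarith)]
      ring

lemma aux_poly (p : ℕ) (x : ℝ) :
    ∫ y in (0:ℝ)..x, ((p:ℝ)+2)*((p:ℝ)+1) * (y^p * (1-y))
      = ((p:ℝ)+2) * x^(p+1) - ((p:ℝ)+1) * x^(p+2) := by
  have h1 : (fun y : ℝ => ((p:ℝ)+2)*((p:ℝ)+1) * (y^p * (1-y)))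
      = fun y : ℝ => ((p:ℝ)+2)*((p:ℝ)+1) * y^p - ((p:ℝ)+2)*((p:ℝ)+1) * y^(p+1) := by
    funext y; ring
  rw [h1, intervalIntegral.integral_sub
      ((by fun_prop : Continuous fun y : ℝ => ((p:ℝ)+2)*((p:ℝ)+1) * y^p).intervalIntegrable 0 x)
      ((by fun_prop : Continuous fun y : ℝ => ((p:ℝ)+2)*((p:ℝ)+1) * y^(p+1)).intervalIntegrable 0 x),
    intervalIntegral.integral_const_mul, intervalIntegral.integral_const_mul,
    integral_pow, integral_pow]
  have hp1 : ((p:ℝ)+1) ≠ 0 := by positivity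
  have hp2 : ((p:ℝ)+1+1) ≠ 0 := by positivity
  push_cast
  field_simp
  ring

theorem stmt_5 (n : ℕ) (hn : 2 ≤ n) (f : ℝ → ℝ)
    (hf0 : ∀ z ∈ Icc (0:ℝ) 1, 0 ≤ f z)
    (hfi : MeasureTheory.IntegrableOn f (Icc (0:ℝ) 1))
    (hf1 : (∫ z in (0:ℝ)..1, f z) = 1)
    (F : ℝ → ℝ) (hF : ∀ t, F t = ∫ z in (0:ℝ)..t, f z)
    (x : ℝ) (hx : x ∈ Icc (0:ℝ) 1) :
    (∫ z in (0:ℝ)..1,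
        (∫ y in (0:ℝ)..x,
          (if y = 1 then 1 else min (2 * (x - y + z) / (1 - y)) 1)
            * ((n:ℝ) * ((n:ℝ) - 1) * (1 - y) * y ^ (n-2))) * f z)
      = (n:ℝ) * x ^ (n-1) - ((n:ℝ) - 1) * x ^ n
        - 2 * (n:ℝ) * ((n:ℝ) - 1) *
          ∫ y in (max (2*x - 1) 0)..x, y ^ (n-2) * ∫ z in (0:ℝ)..((1 + y)/2 - x), F z := by
  obtain ⟨hx0, hx1⟩ := hx
  obtain ⟨p, rfl⟩ : ∃ p, n = p + 2 := ⟨n - 2, by omega⟩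
  clear hn
  have hsub2 : p + 2 - 2 = p := by omega
  have hsub1 : p + 2 - 1 = p + 1 := by omega
  have hcast : ((p+2:ℕ):ℝ) = (p:ℝ)+2 := by push_cast; ring
  rw [hsub2, hsub1, hcast]
  haveI hμx_fin : IsFiniteMeasure (volume.restrict (Ioc (0:ℝ) x)) := aux_fin 0 x
  have hfi' : IntegrableOn f (Ioc (0:ℝ) 1) := hfi.mono_set Ioc_subset_Icc_self
  set m : ℝ := max (2*x - 1) 0 with hm
  have hm0 : (0:ℝ) ≤ m := le_max_right _ _
  have hmx : m ≤ x := max_le (by linarith) hx0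
  set A : ℝ := ((p:ℝ)+2)*((p:ℝ)+1) with hA
  set Φ : ℝ × ℝ → ℝ := fun q => q.2^p * max (1+q.2-2*x-2*q.1) 0 with hΦ
  have hΦc : Continuous Φ := by
    apply Continuous.mul
    · exact (continuous_pow p).comp continuous_snd
    · exact Continuous.max (by fun_prop) continuous_const
  -- Step 1: pointwise inner integral value
  have inner_eq : ∀ z : ℝ, 0 ≤ z →
      (∫ y in (0:ℝ)..x,
        (if y = 1 then 1 else min (2 * (x - y + z) / (1 - y)) 1)
          * (((p:ℝ)+2) * (((p:ℝ)+2) - 1) * (1 - y) * y ^ p))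
      = (((p:ℝ)+2) * x^(p+1) - ((p:ℝ)+1) * x^(p+2))
        - A * ∫ y in Ioc (0:ℝ) x, y^p * max (1+y-2*x-2*z) 0 := by
    intro z hz
    have hcongr : EqOn
        (fun y => (if y = 1 then 1 else min (2 * (x - y + z) / (1 - y)) 1)
          * (((p:ℝ)+2) * (((p:ℝ)+2) - 1) * (1 - y) * y ^ p))
        (fun y => A * (y^p * (1-y)) - A * (y^p * max (1+y-2*x-2*z) 0))
        (uIcc (0:ℝ) x) := by
      intro y hy
      rw [uIcc_of_le hx0] at hy
      have key := aux_key hy.1 hy.2 hx1 hz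
      set t := (if y = 1 then (1:ℝ) else min (2 * (x - y + z) / (1 - y)) 1) with ht
      simp only [hA]
      linear_combination ((((p:ℝ)+2)*((p:ℝ)+1)) * y^p) * key
    have int1 : IntervalIntegrable (fun y : ℝ => A * (y^p * (1-y))) volume 0 x := by
      apply Continuous.intervalIntegrable
      fun_prop
    have int2 : IntervalIntegrable (fun y : ℝ => A * (y^p * max (1+y-2*x-2*z) 0)) volume 0 x := by
      apply Continuous.intervalIntegrable
      exact continuous_const.mul ((continuous_pow p).mul
        ((Continuous.max (by fun_prop) continuous_const)))
    rw [intervalIntegral.integral_congr hcongr, intervalIntegral.integral_sub int1 int2]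
    rw [show (fun y : ℝ => A * (y^p * (1-y))) = fun y : ℝ => ((p:ℝ)+2)*((p:ℝ)+1) * (y^p * (1-y)) by rw [hA]]
    rw [aux_poly p x, intervalIntegral.integral_const_mul,
      intervalIntegral.integral_of_le hx0]
  -- Step 2: product integrability
  have hΦb : ∀ q ∈ (Ioc (0:ℝ) 1) ×ˢ (Ioc (0:ℝ) x), |Φ q| ≤ 2 := by
    rintro ⟨z, y⟩ ⟨hz, hy⟩
    have hy0' : (0:ℝ) ≤ y := hy.1.le
    have hy1 : y ≤ 1 := hy.2.trans hx1
    have hyp : y ^ p ≤ 1 := by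
      calc y ^ p ≤ 1 ^ p := pow_le_pow_left₀ hy0' hy1 p
      _ = 1 := one_pow p
    have hmax0 : (0:ℝ) ≤ max (1+y-2*x-2*z) 0 := le_max_right _ _
    have hmaxle : max (1+y-2*x-2*z) 0 ≤ 2 := max_le (by linarith [hz.1]) (by norm_num)
    simp only [hΦ]
    rw [abs_of_nonneg (mul_nonneg (pow_nonneg hy0' p) hmax0)]
    calc y^p * max (1+y-2*x-2*z) 0 ≤ 1 * 2 := mul_le_mul hyp hmaxle hmax0 (by norm_num)
    _ = 2 := by norm_num
  have HG : Integrable (fun q : ℝ × ℝ => Φ q * f q.1)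
      ((volume.restrict (Ioc (0:ℝ) 1)).prod (volume.restrict (Ioc (0:ℝ) x))) :=
    aux_prod_integrable hfi' Φ hΦc.aestronglyMeasurable hΦb
  have hswap : (∫ z in Ioc (0:ℝ) 1, ∫ y in Ioc (0:ℝ) x, Φ (z, y) * f z)
      = ∫ y in Ioc (0:ℝ) x, ∫ z in Ioc (0:ℝ) 1, Φ (z, y) * f z :=
    integral_integral_swap HG
  -- Step 3: per-y analysis of the swapped inner integral
  have hhy : EqOn (fun y => ∫ z in Ioc (0:ℝ) 1, Φ (z, y) * f z)
      (fun y => 2 * (y^p * ∫ z in (0:ℝ)..((1 + y)/2 - x), F z)) (Ioc m x) := by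
    intro y hy
    show (∫ z in Ioc (0:ℝ) 1, Φ (z, y) * f z)
      = 2 * (y^p * ∫ z in (0:ℝ)..((1 + y)/2 - x), F z)
    have hml : 2*x - 1 ≤ m := le_max_left _ _
    have hg0 : 0 ≤ (1 + y)/2 - x := by
      have := hy.1
      linarith
    have hg1 : (1 + y)/2 - x ≤ 1 := by linarith [hy.2, hx0]
    have hptw : ∀ z, Φ (z, y) * f z
        = (2 * y^p) * (max ((1 + y)/2 - x - z) 0 * f z) := by
      intro z
      have h2' : max (1+y-2*x-2*z) 0 = 2 * max ((1 + y)/2 - x - z) 0 := by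
        have h3' := aux_max2 ((1 + y)/2 - x - z)
        rw [show 2*((1 + y)/2 - x - z) = 1+y-2*x-2*z by ring] at h3'
        exact h3'
      simp only [hΦ]
      rw [h2']; ring
    simp only [hptw]
    rw [integral_const_mul, aux_F hfi hF hg0 hg1]
    ring
  have hhy0 : EqOn (fun y => ∫ z in Ioc (0:ℝ) 1, Φ (z, y) * f z)
      (fun _ => (0:ℝ)) (Ioc (0:ℝ) m) := by
    intro y hy
    show (∫ z in Ioc (0:ℝ) 1, Φ (z, y) * f z) = 0
    have hy2x : y ≤ 2*x - 1 := by
      rcases le_or_gt y (2*x - 1) with h|h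
      · exact h
      · exfalso
        have h0' : y ≤ max (2*x - 1) 0 := hy.2
        rcases max_choice (2*x - 1) (0:ℝ) with hc|hc <;> rw [hc] at h0' <;> linarith [hy.1]
    have : EqOn (fun z => Φ (z, y) * f z) (fun _ => (0:ℝ)) (Ioc (0:ℝ) 1) := by
      intro z hz
      have hmax : max (1+y-2*x-2*z) 0 = 0 := max_eq_right (by linarith [hz.1])
      simp only [hΦ]
      rw [hmax, mul_zero, zero_mul]
    rw [setIntegral_congr_fun measurableSet_Ioc this, integral_zero]
  -- Step 4: split the y-integral
  have hint_h : IntegrableOn (fun y => ∫ z in Ioc (0:ℝ) 1, Φ (z, y) * f z) (Ioc (0:ℝ) x) :=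
    HG.integral_prod_right
  have hun : Ioc (0:ℝ) x = Ioc 0 m ∪ Ioc m x := (Ioc_union_Ioc_eq_Ioc hm0 hmx).symm
  have hsplit : (∫ y in Ioc (0:ℝ) x, ∫ z in Ioc (0:ℝ) 1, Φ (z, y) * f z)
      = 2 * ∫ y in Ioc m x, y^p * ∫ z in (0:ℝ)..((1 + y)/2 - x), F z := by
    rw [hun, setIntegral_union (Ioc_disjoint_Ioc_of_le le_rfl) measurableSet_Ioc
      (hint_h.mono_set (Ioc_subset_Ioc_right hmx)) (hint_h.mono_set (Ioc_subset_Ioc_left hm0)),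
      setIntegral_congr_fun measurableSet_Ioc hhy0, integral_zero, zero_add,
      setIntegral_congr_fun measurableSet_Ioc hhy, integral_const_mul]
  -- Step 5: rewrite the LHS
  have hC0f : IntegrableOn (fun z =>
      ((((p:ℝ)+2) * x^(p+1) - ((p:ℝ)+1) * x^(p+2))) * f z) (Ioc (0:ℝ) 1) :=
    hfi'.const_mul _
  have hKf : IntegrableOn (fun z =>
      (∫ y in Ioc (0:ℝ) x, y^p * max (1+y-2*x-2*z) 0) * f z) (Ioc (0:ℝ) 1) := by
    have h := HG.integral_prod_left
    simp only [integral_mul_const] at h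
    exact h
  have hKswap : (∫ z in Ioc (0:ℝ) 1,
        (∫ y in Ioc (0:ℝ) x, y^p * max (1+y-2*x-2*z) 0) * f z)
      = ∫ y in Ioc (0:ℝ) x, ∫ z in Ioc (0:ℝ) 1, Φ (z, y) * f z := by
    rw [← hswap]
    simp only [integral_mul_const, hΦ]
  rw [intervalIntegral.integral_of_le (by norm_num : (0:ℝ) ≤ 1)]
  rw [setIntegral_congr_fun measurableSet_Ioc
    (g := fun z => ((((p:ℝ)+2) * x^(p+1) - ((p:ℝ)+1) * x^(p+2))
      - A * ∫ y in Ioc (0:ℝ) x, y^p * max (1+y-2*x-2*z) 0) * f z)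
    (fun z hz => by rw [inner_eq z hz.1.le])]
  have hexp : EqOn (fun z => ((((p:ℝ)+2) * x^(p+1) - ((p:ℝ)+1) * x^(p+2))
      - A * ∫ y in Ioc (0:ℝ) x, y^p * max (1+y-2*x-2*z) 0) * f z)
      (fun z => (((p:ℝ)+2) * x^(p+1) - ((p:ℝ)+1) * x^(p+2)) * f z
        - A * ((∫ y in Ioc (0:ℝ) x, y^p * max (1+y-2*x-2*z) 0) * f z)) (Ioc (0:ℝ) 1) := by
    intro z _
    ring
  rw [setIntegral_congr_fun measurableSet_Ioc hexp,
    integral_sub hC0f ((hKf.const_mul A)), integral_const_mul, integral_const_mul,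
    hKswap, hsplit]
  have hf1' : (∫ z in Ioc (0:ℝ) 1, f z) = 1 := by
    rw [← intervalIntegral.integral_of_le (by norm_num : (0:ℝ) ≤ 1)]
    exact hf1
  rw [hf1', intervalIntegral.integral_of_le hmx]
  simp only [hA]
  ring
end

section
/- For every integer n ≥ 2, the operator Ω defined on bounded measurable functions F : [0,1] → ℝ by ΩF(x) = n·x^(n-1) − (n−1)·x^n − 2n(n−1)·∫_{max(2x−1,0)}^{x} y^(n−2) · ( ∫₀^{(1+y)/2 − x} F(z) dz ) dy is a contraction in the supremum norm with contraction constant ((n−1)/n)^(n−1): for all bounded measurable F₁, F₂ : [0,1] → ℝ and all x ∈ [0,1], |ΩF₁(x) − ΩF₂(x)| ≤ ((n−1)/n)^(n−1) · sup_{z ∈ [0,1]} |F₁(z) − F₂(z)|. -/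
lemma key_poly (n : ℕ) (hn : 2 ≤ n) (x : ℝ) (hx0 : 0 ≤ x) (hx1 : x ≤ 1) :
    (n:ℝ) * x ^ (n-1) * (1-x) ≤ (((n:ℝ) - 1) / n) ^ (n-1) := by
  set m : ℕ := n - 1 with hm
  have hmn : (m:ℝ) = (n:ℝ) - 1 := by
    have : (1:ℕ) ≤ n := by omega
    push_cast [hm, Nat.cast_sub this]; ring
  have hn2 : (2:ℝ) ≤ (n:ℝ) := by exact_mod_cast hn
  have hmpos : (0:ℝ) < m := by rw [hmn]; linarith
  have hnpos : (0:ℝ) < n := by linarith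
  set p₁ : ℝ := (n:ℝ) * x / m with hp₁
  set p₂ : ℝ := (n:ℝ) * (1-x) with hp₂
  have hp₁0 : 0 ≤ p₁ := div_nonneg (by positivity) hmpos.le
  have hp₂0 : 0 ≤ p₂ := mul_nonneg hnpos.le (by linarith)
  have hgm : p₁ ^ ((m:ℝ)/n) * p₂ ^ ((1:ℝ)/n) ≤ 1 := by
    have := Real.geom_mean_le_arith_mean2_weighted
      (by positivity : (0:ℝ) ≤ (m:ℝ)/n) (by positivity : (0:ℝ) ≤ (1:ℝ)/n)
      hp₁0 hp₂0 (by field_simp; linarith [hmn])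
    calc p₁ ^ ((m:ℝ)/n) * p₂ ^ ((1:ℝ)/n) ≤ (m:ℝ)/n * p₁ + 1/n * p₂ := this
      _ = 1 := by rw [hp₁, hp₂]; field_simp; ring
  have hpow : p₁ ^ m * p₂ ≤ 1 := by
    have h2 : (p₁ ^ ((m:ℝ)/n) * p₂ ^ ((1:ℝ)/n)) ^ (n:ℕ) ≤ 1 ^ (n:ℕ) :=
      pow_le_pow_left₀ (by positivity) hgm n
    rw [one_pow, mul_pow, ← Real.rpow_natCast (p₁ ^ ((m:ℝ)/n)) n,
      ← Real.rpow_natCast (p₂ ^ ((1:ℝ)/n)) n,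
      ← Real.rpow_mul hp₁0, ← Real.rpow_mul hp₂0] at h2
    have e1 : (m:ℝ)/n * n = m := by field_simp
    have e2 : (1:ℝ)/n * n = 1 := by field_simp
    rw [e1, e2, Real.rpow_natCast, Real.rpow_one] at h2
    exact h2
  have h1 : ((m:ℝ)/n) ^ m * p₁ ^ m = x ^ m := by
    rw [← mul_pow]
    congr 1
    rw [hp₁]
    field_simp
  have heq : (n:ℝ) * x ^ m * (1-x) = ((m:ℝ)/n) ^ m * (p₁ ^ m * p₂) := by
    rw [← mul_assoc, h1, hp₂]; ring
  calc (n:ℝ) * x ^ m * (1-x) = ((m:ℝ)/n) ^ m * (p₁ ^ m * p₂) := heq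
    _ ≤ ((m:ℝ)/n) ^ m * 1 := by
        apply mul_le_mul_of_nonneg_left hpow (by positivity)
    _ = (((n:ℝ) - 1) / n) ^ (n-1) := by rw [mul_one, hmn]

open Set MeasureTheory intervalIntegral

theorem stmt_6 (n : ℕ) (hn : 2 ≤ n)
    (F₁ F₂ : ℝ → ℝ) (hm₁ : Measurable F₁) (hm₂ : Measurable F₂)
    (hb₁ : ∃ C : ℝ, ∀ x ∈ Icc (0:ℝ) 1, |F₁ x| ≤ C)
    (hb₂ : ∃ C : ℝ, ∀ x ∈ Icc (0:ℝ) 1, |F₂ x| ≤ C)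
    (x : ℝ) (hx : x ∈ Icc (0:ℝ) 1) :
    |((n:ℝ) * x ^ (n-1) - ((n:ℝ) - 1) * x ^ n
        - 2 * (n:ℝ) * ((n:ℝ) - 1) *
          ∫ y in (max (2*x - 1) 0)..x, y ^ (n-2) * ∫ z in (0:ℝ)..((1 + y)/2 - x), F₁ z)
      - ((n:ℝ) * x ^ (n-1) - ((n:ℝ) - 1) * x ^ n
        - 2 * (n:ℝ) * ((n:ℝ) - 1) *
          ∫ y in (max (2*x - 1) 0)..x, y ^ (n-2) * ∫ z in (0:ℝ)..((1 + y)/2 - x), F₂ z)|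
      ≤ (((n:ℝ) - 1) / n) ^ (n-1) * sSup ((fun z => |F₁ z - F₂ z|) '' Icc (0:ℝ) 1) := by
  obtain ⟨hx0, hx1⟩ := hx
  obtain ⟨C₁, hC₁⟩ := hb₁
  obtain ⟨C₂, hC₂⟩ := hb₂
  have hn2 : (2:ℝ) ≤ (n:ℝ) := by exact_mod_cast hn
  set M := sSup ((fun z => |F₁ z - F₂ z|) '' Icc (0:ℝ) 1) with hMdef
  have hbdd : BddAbove ((fun z => |F₁ z - F₂ z|) '' Icc (0:ℝ) 1) := by
    refine ⟨C₁ + C₂, ?_⟩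
    rintro v ⟨z, hz, rfl⟩
    calc |F₁ z - F₂ z| ≤ |F₁ z| + |F₂ z| := abs_sub _ _
      _ ≤ C₁ + C₂ := add_le_add (hC₁ z hz) (hC₂ z hz)
  have hMz : ∀ z ∈ Icc (0:ℝ) 1, |F₁ z - F₂ z| ≤ M :=
    fun z hz => le_csSup hbdd ⟨z, hz, rfl⟩
  have hM0 : 0 ≤ M := le_trans (abs_nonneg _) (hMz 0 ⟨le_refl _, zero_le_one⟩)
  set a := max (2*x - 1) 0 with ha
  have ha0 : 0 ≤ a := le_max_right _ _
  have ha2x : 2*x - 1 ≤ a := le_max_left _ _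
  have hax : a ≤ x := max_le (by linarith) hx0
  -- integrability of F₁, F₂ on [0,1]
  have hIF : ∀ (F : ℝ → ℝ) (C : ℝ), Measurable F → (∀ z ∈ Icc (0:ℝ) 1, |F z| ≤ C) →
      IntegrableOn F (Icc (0:ℝ) 1) volume := by
    intro F C hm hC
    apply Measure.integrableOn_of_bounded (M := C) measure_Icc_lt_top.ne
      hm.aestronglyMeasurable
    exact (ae_restrict_iff' measurableSet_Icc).2 (Filter.Eventually.of_forall
      (fun z hz => by simpa using hC z hz))
  have hIF₁ := hIF F₁ C₁ hm₁ hC₁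
  have hIF₂ := hIF F₂ C₂ hm₂ hC₂
  -- interval integrability of inner integrals
  have hinner : ∀ (F : ℝ → ℝ), IntegrableOn F (Icc (0:ℝ) 1) volume →
      ∀ y ∈ Icc a x, IntervalIntegrable F volume 0 ((1+y)/2 - x) := by
    intro F hIF y hy
    have hc0 : (0:ℝ) ≤ (1+y)/2 - x := by
      have := hy.1; linarith [le_trans ha2x this]
    have hc1 : (1+y)/2 - x ≤ 1 := by
      have := hy.2; linarith
    rw [intervalIntegrable_iff_integrableOn_Ioc_of_le hc0]
    exact hIF.mono_set (fun z hz => ⟨hz.1.le, le_trans hz.2 hc1⟩)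
  -- continuity of the integrands
  have hcont : ∀ (F : ℝ → ℝ), IntegrableOn F (Icc (0:ℝ) 1) volume →
      ContinuousOn (fun y => (y:ℝ) ^ (n-2) * ∫ z in (0:ℝ)..((1 + y)/2 - x), F z)
        (Icc a x) := by
    intro F hIF
    apply ContinuousOn.mul ((continuous_pow (n-2)).continuousOn)
    have hΦ : ContinuousOn (fun t => ∫ z in (0:ℝ)..t, F z) (uIcc (0:ℝ) 1) := by
      apply intervalIntegral.continuousOn_primitive_interval
      rwa [uIcc_of_le zero_le_one]
    have hc : ContinuousOn (fun y : ℝ => (1+y)/2 - x) (Icc a x) := by fun_prop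
    apply hΦ.comp hc
    intro y hy
    rw [uIcc_of_le zero_le_one]
    constructor
    · have := hy.1; linarith [le_trans ha2x this]
    · have := hy.2; linarith
  have hII₁ : IntervalIntegrable
      (fun y => (y:ℝ) ^ (n-2) * ∫ z in (0:ℝ)..((1 + y)/2 - x), F₁ z) volume a x :=
    ContinuousOn.intervalIntegrable (by rw [uIcc_of_le hax]; exact hcont F₁ hIF₁)
  have hII₂ : IntervalIntegrable
      (fun y => (y:ℝ) ^ (n-2) * ∫ z in (0:ℝ)..((1 + y)/2 - x), F₂ z) volume a x :=
    ContinuousOn.intervalIntegrable (by rw [uIcc_of_le hax]; exact hcont F₂ hIF₂)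
  -- rewrite the LHS
  have hsplit : ((n:ℝ) * x ^ (n-1) - ((n:ℝ) - 1) * x ^ n
        - 2 * (n:ℝ) * ((n:ℝ) - 1) *
          ∫ y in a..x, y ^ (n-2) * ∫ z in (0:ℝ)..((1 + y)/2 - x), F₁ z)
      - ((n:ℝ) * x ^ (n-1) - ((n:ℝ) - 1) * x ^ n
        - 2 * (n:ℝ) * ((n:ℝ) - 1) *
          ∫ y in a..x, y ^ (n-2) * ∫ z in (0:ℝ)..((1 + y)/2 - x), F₂ z)
      = 2 * (n:ℝ) * ((n:ℝ) - 1) *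
        ((∫ y in a..x, y ^ (n-2) * ∫ z in (0:ℝ)..((1 + y)/2 - x), F₂ z)
          - ∫ y in a..x, y ^ (n-2) * ∫ z in (0:ℝ)..((1 + y)/2 - x), F₁ z) := by ring
  rw [hsplit, abs_mul, abs_of_nonneg (by nlinarith : (0:ℝ) ≤ 2 * (n:ℝ) * ((n:ℝ) - 1))]
  rw [← intervalIntegral.integral_sub hII₂ hII₁]
  -- pointwise bound
  have hptwise : ∀ y ∈ Icc a x,
      |(y:ℝ) ^ (n-2) * (∫ z in (0:ℝ)..((1 + y)/2 - x), F₂ z)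
        - y ^ (n-2) * ∫ z in (0:ℝ)..((1 + y)/2 - x), F₁ z|
      ≤ (1-x)/2 * M * y ^ (n-2) := by
    intro y hy
    have hy0 : 0 ≤ y := le_trans ha0 hy.1
    have hc0 : (0:ℝ) ≤ (1+y)/2 - x := by
      have := hy.1; linarith [le_trans ha2x this]
    have hc1 : (1+y)/2 - x ≤ 1 := by have := hy.2; linarith
    have hcx : (1+y)/2 - x ≤ (1-x)/2 := by have := hy.2; linarith
    have hdiff : (∫ z in (0:ℝ)..((1 + y)/2 - x), F₂ z)
        - ∫ z in (0:ℝ)..((1 + y)/2 - x), F₁ z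
        = ∫ z in (0:ℝ)..((1 + y)/2 - x), (F₂ z - F₁ z) :=
      (intervalIntegral.integral_sub (hinner F₂ hIF₂ y hy) (hinner F₁ hIF₁ y hy)).symm
    have hbnd : |∫ z in (0:ℝ)..((1 + y)/2 - x), (F₂ z - F₁ z)| ≤ M * |((1+y)/2 - x) - 0| := by
      rw [← Real.norm_eq_abs]
      apply intervalIntegral.norm_integral_le_of_norm_le_const
      intro z hz
      rw [uIoc_of_le hc0] at hz
      have hz01 : z ∈ Icc (0:ℝ) 1 := ⟨hz.1.le, le_trans hz.2 hc1⟩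
      rw [Real.norm_eq_abs, abs_sub_comm]
      exact hMz z hz01
    rw [← mul_sub, abs_mul, abs_of_nonneg (pow_nonneg hy0 _), hdiff]
    rw [sub_zero, abs_of_nonneg hc0] at hbnd
    calc y ^ (n-2) * |∫ z in (0:ℝ)..((1 + y)/2 - x), (F₂ z - F₁ z)|
        ≤ y ^ (n-2) * ((1-x)/2 * M) := by
          apply mul_le_mul_of_nonneg_left _ (pow_nonneg hy0 _)
          calc |∫ z in (0:ℝ)..((1 + y)/2 - x), (F₂ z - F₁ z)|
              ≤ M * ((1+y)/2 - x) := hbnd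
            _ ≤ (1-x)/2 * M := by nlinarith
      _ = (1-x)/2 * M * y ^ (n-2) := by ring
  -- integral bound
  have hmono : |∫ y in a..x, ((y:ℝ) ^ (n-2) * (∫ z in (0:ℝ)..((1 + y)/2 - x), F₂ z)
        - y ^ (n-2) * ∫ z in (0:ℝ)..((1 + y)/2 - x), F₁ z)|
      ≤ ∫ y in a..x, (1-x)/2 * M * y ^ (n-2) := by
    calc |∫ y in a..x, ((y:ℝ) ^ (n-2) * (∫ z in (0:ℝ)..((1 + y)/2 - x), F₂ z)
          - y ^ (n-2) * ∫ z in (0:ℝ)..((1 + y)/2 - x), F₁ z)|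
        ≤ ∫ y in a..x, |(y:ℝ) ^ (n-2) * (∫ z in (0:ℝ)..((1 + y)/2 - x), F₂ z)
          - y ^ (n-2) * ∫ z in (0:ℝ)..((1 + y)/2 - x), F₁ z| :=
          intervalIntegral.abs_integral_le_integral_abs hax
      _ ≤ ∫ y in a..x, (1-x)/2 * M * y ^ (n-2) := by
          apply intervalIntegral.integral_mono_on hax (hII₂.sub hII₁).abs
            (Continuous.intervalIntegrable (by fun_prop) a x) hptwise
  have hpowint : ∫ y in a..x, (1-x)/2 * M * (y:ℝ) ^ (n-2)
      = (1-x)/2 * M * ((x ^ (n-1) - a ^ (n-1)) / ((n:ℝ) - 1)) := by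
    rw [intervalIntegral.integral_const_mul, integral_pow]
    have h1 : n - 2 + 1 = n - 1 := by omega
    have h2 : ((n-2:ℕ):ℝ) + 1 = (n:ℝ) - 1 := by
      have : (2:ℕ) ≤ n := hn
      push_cast [Nat.cast_sub this]; ring
    rw [h1, h2]
  have hfinal : (1-x)/2 * M * ((x ^ (n-1) - a ^ (n-1)) / ((n:ℝ) - 1))
      ≤ (1-x)/2 * M * (x ^ (n-1) / ((n:ℝ) - 1)) := by
    apply mul_le_mul_of_nonneg_left _ (by nlinarith : (0:ℝ) ≤ (1-x)/2 * M)
    apply (div_le_div_iff_of_pos_right (by linarith : (0:ℝ) < (n:ℝ) - 1)).2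
    nlinarith [pow_nonneg ha0 (n-1)]
  have hle : |∫ y in a..x, ((y:ℝ) ^ (n-2) * (∫ z in (0:ℝ)..((1 + y)/2 - x), F₂ z)
        - y ^ (n-2) * ∫ z in (0:ℝ)..((1 + y)/2 - x), F₁ z)|
      ≤ (1-x)/2 * M * (x ^ (n-1) / ((n:ℝ) - 1)) :=
    le_trans hmono (le_trans (le_of_eq hpowint) hfinal)
  calc 2 * (n:ℝ) * ((n:ℝ) - 1) * |∫ y in a..x,
          ((y:ℝ) ^ (n-2) * (∫ z in (0:ℝ)..((1 + y)/2 - x), F₂ z)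
            - y ^ (n-2) * ∫ z in (0:ℝ)..((1 + y)/2 - x), F₁ z)|
      ≤ 2 * (n:ℝ) * ((n:ℝ) - 1) * ((1-x)/2 * M * (x ^ (n-1) / ((n:ℝ) - 1))) :=
        mul_le_mul_of_nonneg_left hle (by nlinarith)
    _ = ((n:ℝ) * x ^ (n-1) * (1-x)) * M := by
        have hne : (n:ℝ) - 1 ≠ 0 := by linarith
        field_simp
    _ ≤ (((n:ℝ) - 1) / n) ^ (n-1) * M :=
        mul_le_mul_of_nonneg_right (key_poly n hn x hx0 hx1) hM0
end

section
/- For every integer n ≥ 2 and every x ∈ [0,1], the inequality 2n(n−1)·∫_{max(2x−1,0)}^{x} y^(n−2)·((1+y)/2 − x) dy ≤ ((n−1)/n)^(n−1) holds. -/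
open Set

lemma key_amgm (k : ℕ) : ∀ p : ℝ, 0 ≤ p → p ^ k * (((k:ℝ) + 1) - k * p) ≤ 1 := by
  induction k with
  | zero => intro p hp; norm_num
  | succ k ih =>
      intro p hp
      have h1 := ih p hp
      have h2 : p * (((k:ℝ) + 2) - ((k:ℝ) + 1) * p) ≤ ((k:ℝ) + 1) - k * p := by
        nlinarith [sq_nonneg (p - 1), Nat.cast_nonneg (α := ℝ) k]
      have h3 : p ^ k * (p * (((k:ℝ) + 2) - ((k:ℝ) + 1) * p)) ≤ p ^ k * (((k:ℝ) + 1) - k * p) :=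
        mul_le_mul_of_nonneg_left h2 (pow_nonneg hp k)
      calc p ^ (k+1) * ((↑(k+1) : ℝ) + 1 - (↑(k+1) : ℝ) * p)
          = p ^ k * (p * (((k:ℝ) + 2) - ((k:ℝ) + 1) * p)) := by push_cast; ring
        _ ≤ p ^ k * (((k:ℝ) + 1) - k * p) := h3
        _ ≤ 1 := h1

lemma amgm_pow (m : ℕ) (x : ℝ) (hx0 : 0 ≤ x) :
    ((m:ℝ) + 2) * x ^ (m+1) * (1 - x) ≤ (((m:ℝ) + 1) / ((m:ℝ) + 2)) ^ (m+1) := by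
  have hm1 : (0:ℝ) < (m:ℝ) + 1 := by positivity
  have hm2 : (0:ℝ) < (m:ℝ) + 2 := by positivity
  set p : ℝ := ((m:ℝ) + 2) * x / ((m:ℝ) + 1) with hp
  have hp0 : 0 ≤ p := by positivity
  have hk := key_amgm (m+1) p hp0
  have hcast : ((m+1:ℕ):ℝ) = (m:ℝ) + 1 := by push_cast; ring
  rw [hcast] at hk
  -- p^(m+1) * ((m+2) - (m+1)*p) ≤ 1
  have hpe : ((m:ℝ) + 1) * p = ((m:ℝ) + 2) * x := by
    rw [hp]; field_simp
  have hfac : ((m:ℝ) + 1 + 1) - ((m:ℝ) + 1) * p = ((m:ℝ) + 2) * (1 - x) := by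
    rw [hpe]; ring
  rw [hfac] at hk
  -- multiply hk by (m+1)^(m+1) > 0
  have h2 : (((m:ℝ) + 1) * p) ^ (m+1) * (((m:ℝ) + 2) * (1 - x)) ≤ ((m:ℝ) + 1) ^ (m+1) := by
    have := mul_le_mul_of_nonneg_left hk (le_of_lt (pow_pos hm1 (m+1)))
    calc (((m:ℝ) + 1) * p) ^ (m+1) * (((m:ℝ) + 2) * (1 - x))
        = ((m:ℝ)+1)^(m+1) * (p ^ (m+1) * (((m:ℝ) + 2) * (1 - x))) := by rw [mul_pow]; ring
      _ ≤ ((m:ℝ)+1)^(m+1) * 1 := this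
      _ = ((m:ℝ) + 1) ^ (m+1) := by ring
  rw [hpe, mul_pow] at h2
  rw [div_pow, le_div_iff₀ (pow_pos hm2 (m+1))]
  nlinarith [h2]

theorem stmt_7 (n : ℕ) (hn : 2 ≤ n) (x : ℝ) (hx : x ∈ Icc (0:ℝ) 1) :
    2 * (n:ℝ) * ((n:ℝ) - 1) *
        (∫ y in (max (2*x - 1) 0)..x, y ^ (n-2) * ((1 + y)/2 - x))
      ≤ (((n:ℝ) - 1) / n) ^ (n-1) := by
  obtain ⟨hx0, hx1⟩ := hx
  obtain ⟨m, rfl⟩ : ∃ m, n = m + 2 := ⟨n - 2, by omega⟩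
  have e1 : m + 2 - 2 = m := by omega
  have e2 : m + 2 - 1 = m + 1 := by omega
  rw [e1, e2]
  set a : ℝ := max (2*x - 1) 0 with ha
  have ha0 : 0 ≤ a := le_max_right _ _
  have hax : a ≤ x := max_le (by linarith) hx0
  have hm1 : (0:ℝ) < (m:ℝ) + 1 := by positivity
  have hm2 : (0:ℝ) < (m:ℝ) + 2 := by positivity
  have hI : (∫ y in a..x, y ^ m * ((1 + y)/2 - x))
      = (1/2 - x) * ((x^(m+1) - a^(m+1))/((m:ℝ)+1)) + (1/2) * ((x^(m+2) - a^(m+2))/((m:ℝ)+2)) := by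
    have hcong : EqOn (fun y : ℝ => y ^ m * ((1 + y)/2 - x))
        (fun y : ℝ => (1/2 - x) * y ^ m + (1/2) * y ^ (m+1)) (uIcc a x) := by
      intro y _; simp only; ring
    rw [intervalIntegral.integral_congr hcong,
      intervalIntegral.integral_add
        ((by fun_prop : Continuous (fun y : ℝ => (1/2 - x) * y ^ m)).intervalIntegrable _ _)
        ((by fun_prop : Continuous (fun y : ℝ => (1/2) * y ^ (m+1))).intervalIntegrable _ _),
      intervalIntegral.integral_const_mul, intervalIntegral.integral_const_mul,
      integral_pow, integral_pow]
    push_cast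
    ring
  rw [hI]
  have hLHS : 2 * ((m:ℝ)+2) * (((m:ℝ)+2) - 1) *
      ((1/2 - x) * ((x^(m+1) - a^(m+1))/((m:ℝ)+1)) + (1/2) * ((x^(m+2) - a^(m+2))/((m:ℝ)+2)))
      = ((m:ℝ)+2)*(1-2*x)*(x^(m+1)-a^(m+1)) + ((m:ℝ)+1)*(x^(m+2)-a^(m+2)) := by
    field_simp
    ring
  have push1 : ((m+2:ℕ):ℝ) = (m:ℝ) + 2 := by push_cast; ring
  rw [push1, hLHS]
  have h2 : ((m:ℝ)+2)*(1-2*x)*(x^(m+1)-a^(m+1)) + ((m:ℝ)+1)*(x^(m+2)-a^(m+2))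
      ≤ ((m:ℝ) + 2) * x ^ (m+1) * (1 - x) := by
    rcases le_or_gt (2*x - 1) 0 with h | h
    · have haz : a = 0 := max_eq_right h
      rw [haz]
      have hz1 : (0:ℝ)^(m+1) = 0 := by simp
      have hz2 : (0:ℝ)^(m+2) = 0 := by simp
      rw [hz1, hz2]
      have hxp : 0 ≤ x ^ (m+2) := pow_nonneg hx0 _
      nlinarith [pow_succ x (m+1)]
    · have haz : a = 2*x - 1 := max_eq_left h.le
      rw [haz]
      have hb : (2*x - 1)^(m+2) ≤ x^(m+2) := pow_le_pow_left₀ h.le (by linarith) _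
      have hid : ((m:ℝ)+2)*x^(m+1)*(1-x) -
          (((m:ℝ)+2)*(1-2*x)*(x^(m+1)-(2*x-1)^(m+1)) + ((m:ℝ)+1)*(x^(m+2)-(2*x-1)^(m+2)))
          = x^(m+2) - (2*x-1)^(m+2) := by ring
      linarith [hid, hb]
  have h3 := amgm_pow m x hx0
  calc ((m:ℝ)+2)*(1-2*x)*(x^(m+1)-a^(m+1)) + ((m:ℝ)+1)*(x^(m+2)-a^(m+2))
      ≤ ((m:ℝ) + 2) * x ^ (m+1) * (1 - x) := h2
    _ ≤ (((m:ℝ) + 1) / ((m:ℝ) + 2)) ^ (m+1) := h3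
    _ = (((m:ℝ) + 2 - 1) / ((m:ℝ) + 2)) ^ (m+1) := by ring_nf
end

section
/- Let n ≥ 3 be an integer and let t⁺ denote max(t,0). Then for every y ∈ [0,1]: ∫₀^{(1−y)/2} 2n·( y^(n−1) + ((y − 2x)⁺)^(n−1) − ((2y − 1)⁺)^(n−1) ) dx + ∫_{(1−y)/2}^{1/2} 2n·(1 − 2x)^(n−1) dx = 2·y^n + n·y^(n−1)·(1 − y) − ((2y − 1)⁺)^n − n·((2y − 1)⁺)^(n−1)·(1 − y). -/
open Set

lemma integ_lin_pow (n : ℕ) (hn : 1 ≤ n) (y a b : ℝ) :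
    ∫ x in a..b, 2 * (n:ℝ) * (y - 2*x)^(n-1) = (y - 2*a)^n - (y - 2*b)^n := by
  have h : ∀ x ∈ Set.uIcc a b,
      HasDerivAt (fun t : ℝ => -(y - 2*t)^n) (2*(n:ℝ)*(y-2*x)^(n-1)) x := by
    intro x _
    have h1 : HasDerivAt (fun t : ℝ => y - 2*t) (-2) x := by
      simpa using ((hasDerivAt_id x).const_mul 2).const_sub y
    have h2 : HasDerivAt (fun t : ℝ => -(y - 2*t)^n) _ x := (h1.pow n).neg
    convert h2 using 1
    ring
  have hc : IntervalIntegrable (fun x : ℝ => 2*(n:ℝ)*(y-2*x)^(n-1)) MeasureTheory.volume a b := by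
    apply Continuous.intervalIntegrable
    fun_prop
  have := intervalIntegral.integral_eq_sub_of_hasDerivAt h hc
  rw [this]; ring

theorem stmt_10 (n : ℕ) (hn : 3 ≤ n) (y : ℝ) (hy : y ∈ Icc (0:ℝ) 1) :
    (∫ x in (0:ℝ)..((1 - y)/2),
        2 * (n:ℝ) * (y ^ (n-1) + (max (y - 2*x) 0) ^ (n-1) - (max (2*y - 1) 0) ^ (n-1)))
      + (∫ x in ((1 - y)/2)..(1/2 : ℝ), 2 * (n:ℝ) * (1 - 2*x) ^ (n-1))
      = 2 * y ^ n + (n:ℝ) * y ^ (n-1) * (1 - y)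
        - (max (2*y - 1) 0) ^ n - (n:ℝ) * (max (2*y - 1) 0) ^ (n-1) * (1 - y) := by
  obtain ⟨hy0, hy1⟩ := hy
  have hn1 : 1 ≤ n := by omega
  have h0pow : (0:ℝ)^(n-1) = 0 := zero_pow (by omega)
  have hpows : y^(n-1) * y = y^n := by
    rw [← pow_succ]; congr 1; omega
  -- second integral
  have hI2 : (∫ x in ((1 - y)/2)..(1/2 : ℝ), 2 * (n:ℝ) * (1 - 2*x) ^ (n-1)) = y^n := by
    have := integ_lin_pow n hn1 1 ((1-y)/2) (1/2)
    rw [this]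
    have : (1:ℝ) - 2*((1-y)/2) = y := by ring
    rw [this]
    simp [zero_pow (by omega : n ≠ 0)]
  rw [hI2]
  rcases le_or_gt y (1/2) with hc | hc
  · -- y ≤ 1/2
    have hm : max (2*y - 1) 0 = 0 := max_eq_right (by linarith)
    rw [hm, h0pow]
    have hcont : Continuous (fun x : ℝ => 2 * (n:ℝ) * (y ^ (n-1) + (max (y - 2*x) 0) ^ (n-1) - 0)) := by
      fun_prop
    have hsplit :
        (∫ x in (0:ℝ)..(y/2), 2 * (n:ℝ) * (y ^ (n-1) + (max (y - 2*x) 0) ^ (n-1) - 0))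
        + (∫ x in (y/2)..((1-y)/2), 2 * (n:ℝ) * (y ^ (n-1) + (max (y - 2*x) 0) ^ (n-1) - 0))
        = ∫ x in (0:ℝ)..((1 - y)/2), 2 * (n:ℝ) * (y ^ (n-1) + (max (y - 2*x) 0) ^ (n-1) - 0) :=
      intervalIntegral.integral_add_adjacent_intervals
        (hcont.intervalIntegrable _ _) (hcont.intervalIntegrable _ _)
    rw [← hsplit]
    have e1 : (∫ x in (0:ℝ)..(y/2), 2 * (n:ℝ) * (y ^ (n-1) + (max (y - 2*x) 0) ^ (n-1) - 0))
        = ∫ x in (0:ℝ)..(y/2), ((2 * (n:ℝ) * y ^ (n-1)) + 2 * (n:ℝ) * (y - 2*x)^(n-1)) := by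
      apply intervalIntegral.integral_congr
      intro x hx
      rw [uIcc_of_le (by linarith)] at hx
      have : 0 ≤ y - 2*x := by linarith [hx.1, hx.2]
      simp only [max_eq_left this]; ring
    have e2 : (∫ x in (y/2)..((1-y)/2), 2 * (n:ℝ) * (y ^ (n-1) + (max (y - 2*x) 0) ^ (n-1) - 0))
        = ∫ x in (y/2)..((1-y)/2), (2 * (n:ℝ) * y ^ (n-1)) := by
      apply intervalIntegral.integral_congr
      intro x hx
      rw [uIcc_of_le (by linarith)] at hx
      have : y - 2*x ≤ 0 := by linarith [hx.1, hx.2]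
      simp only [max_eq_right this, h0pow]; ring
    rw [e1, e2, intervalIntegral.integral_const]
    rw [intervalIntegral.integral_add (by apply Continuous.intervalIntegrable; fun_prop)
      (by apply Continuous.intervalIntegrable; fun_prop)]
    rw [intervalIntegral.integral_const, integ_lin_pow n hn1 y 0 (y/2)]
    have hz : y - 2*(y/2) = 0 := by ring
    rw [hz, zero_pow (by omega : n ≠ 0)]
    simp only [smul_eq_mul, h0pow]
    rw [show y - 2*(0:ℝ) = y from by ring]
    ring
  · -- y > 1/2
    have hm : max (2*y - 1) 0 = 2*y - 1 := max_eq_left (by linarith)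
    rw [hm]
    have e1 : (∫ x in (0:ℝ)..((1-y)/2),
          2 * (n:ℝ) * (y ^ (n-1) + (max (y - 2*x) 0) ^ (n-1) - (2*y-1) ^ (n-1)))
        = ∫ x in (0:ℝ)..((1-y)/2),
          ((2 * (n:ℝ) * (y ^ (n-1) - (2*y-1)^(n-1))) + 2 * (n:ℝ) * (y - 2*x)^(n-1)) := by
      apply intervalIntegral.integral_congr
      intro x hx
      rw [uIcc_of_le (by linarith)] at hx
      have : 0 ≤ y - 2*x := by
        have := hx.2; nlinarith [hx.1, hx.2]
      simp only [max_eq_left this]; ring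
    rw [e1, intervalIntegral.integral_add (by apply Continuous.intervalIntegrable; fun_prop)
      (by apply Continuous.intervalIntegrable; fun_prop)]
    rw [intervalIntegral.integral_const, integ_lin_pow n hn1 y 0 ((1-y)/2)]
    have hz : y - 2*((1-y)/2) = 2*y - 1 := by ring
    rw [hz]
    have hpows2 : (2*y-1)^(n-1) * (2*y-1) = (2*y-1)^n := by
      rw [← pow_succ]; congr 1; omega
    simp only [smul_eq_mul]
    rw [show y - 2*(0:ℝ) = y from by ring]
    ring
end

section
/- Let n ≥ 3 be an integer and let t⁺ denote max(t,0). Define f_A(y) = n·y^(n−2)·( y + (n−1)(1−y) ) − n·((2y−1)⁺)^(n−2)·( 2(n−1)(1−y) + 2y − 1 ), F_A(x) = 2·x^n + n·x^(n−1)·(1−x) − ((2x−1)⁺)^n − n·((2x−1)⁺)^(n−1)·(1−x), and for y ∈ [0,1] and t ≥ 0 define G(t, y) = 2n(n−1)·y^(n−2)·t − n·((y−2t)⁺)^(n−1) + n·y^(n−1) − 4n(n−1)·((2y−1)⁺)^(n−2)·t if 0 ≤ t ≤ min((1−y)/2, 1/4); G(t, y) = 2n(n−1)·y^(n−2)·t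 + n·y^(n−1) if 1/4 ≤ t ≤ (1−y)/2; and G(t, y) = f_A(y) if t ≥ (1−y)/2. Let f : [0,1] → ℝ be a nonnegative integrable function with ∫₀¹ f(z) dz = 1 and let F(t) = ∫₀^t f(z) dz. Then for every x ∈ [0,1]: ∫₀^x ∫₀¹ G(x − y + z, y) · f(z) dz dy = F_A(x) − ∫_{max(2x−1,0)}^{x} ∫₀^{(1+y)/2 − x} 2n(n−1)·y^(n−2)·F(z) dz dy − ∫_{max( max(x−1/4,0), 2x−1 )}^{x} ∫₀^{min( 1/4 + y − x, (1+y)/2 − x )} 2n(n−1)·((3y − 2x − 2z)⁺)^(n−2)·F(z) dz dy + ∫_{max(1/2, 2x−1)}^{max(1/2, x)} ∫₀^{(1+y)/2 − x} 4n(n−1)·(2y−1)^(n−2)·F(z) dz dy. -/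
open Set MeasureTheory intervalIntegral

noncomputable section

lemma maxPow_hasDerivAt (m : ℕ) (hm : 2 ≤ m) (s : ℝ) :
    HasDerivAt (fun t : ℝ => max t 0 ^ m) ((m : ℝ) * max s 0 ^ (m - 1)) s := by
  rcases lt_trichotomy s 0 with h | h | h
  · have : (fun t : ℝ => max t 0 ^ m) =ᶠ[nhds s] fun _ => (0:ℝ) := by
      filter_upwards [Iio_mem_nhds h] with t ht
      simp [max_eq_right (le_of_lt (mem_Iio.1 ht)), zero_pow (by omega : m ≠ 0)]
    have h0 : max s 0 = 0 := max_eq_right h.le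
    rw [h0, zero_pow (by omega : m - 1 ≠ 0), mul_zero]
    exact (hasDerivAt_const s (0:ℝ)).congr_of_eventuallyEq this
  · subst h
    rw [max_self, zero_pow (by omega : m - 1 ≠ 0), mul_zero]
    have heq : ∀ t : ℝ, max t 0 ^ m = max t 0 ^ (m - 1) * t := by
      intro t
      rcases le_total t 0 with ht | ht
      · simp [max_eq_right ht, zero_pow (by omega : m ≠ 0), zero_pow (by omega : m - 1 ≠ 0)]
      · rw [max_eq_left ht, ← pow_succ]
        congr 1; omega
    rw [hasDerivAt_iff_isLittleO]
    simp only [heq, max_self, zero_pow (by omega : m - 1 ≠ 0), zero_mul, sub_zero, smul_zero, zero_pow (by omega : m ≠ 0), mul_zero]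
    have h1 : (fun t : ℝ => max t 0 ^ (m - 1)) =o[nhds 0] (fun _ => (1:ℝ)) := by
      rw [Asymptotics.isLittleO_one_iff]
      have : Continuous (fun t : ℝ => max t 0 ^ (m - 1)) := by fun_prop
      have := this.tendsto 0
      simpa [zero_pow (by omega : m - 1 ≠ 0)] using this
    have := h1.mul_isBigO (Asymptotics.isBigO_refl (fun t : ℝ => t) (nhds 0))
    simpa using this
  · have : (fun t : ℝ => max t 0 ^ m) =ᶠ[nhds s] fun t => t ^ m := by
      filter_upwards [Ioi_mem_nhds h] with t ht
      simp [max_eq_left (le_of_lt (mem_Ioi.1 ht))]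
    rw [max_eq_left h.le]
    exact (hasDerivAt_pow m s).congr_of_eventuallyEq this

lemma min_hasDerivWithinAt (c w : ℝ) :
    HasDerivWithinAt (fun z : ℝ => min z c) (if w < c then (1:ℝ) else 0) (Ioi w) w := by
  rcases lt_trichotomy w c with h | h | h
  · rw [if_pos h]
    have : (fun z : ℝ => min z c) =ᶠ[nhds w] fun z => z := by
      filter_upwards [Iio_mem_nhds h] with z hz
      exact min_eq_left hz.le
    exact ((hasDerivAt_id w).congr_of_eventuallyEq this).hasDerivWithinAt
  · subst h
    rw [if_neg (lt_irrefl w)]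
    exact (hasDerivWithinAt_const w _ w).congr
      (fun z hz => min_eq_right (le_of_lt (mem_Ioi.1 hz))) (min_eq_right le_rfl)
  · rw [if_neg (not_lt.2 h.le)]
    have : (fun z : ℝ => min z c) =ᶠ[nhds w] fun _ => c := by
      filter_upwards [Ioi_mem_nhds h] with z hz
      exact min_eq_right hz.le
    exact ((hasDerivAt_const w c).congr_of_eventuallyEq this).hasDerivWithinAt

lemma evalIf_neg (h : ℝ → ℝ) (u : ℝ) (hu : u ≤ 0) :
    (∫ z in (0:ℝ)..1, (if z < u then h z else 0)) = 0 := by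
  have : (∫ z in (0:ℝ)..1, (if z < u then h z else 0)) = ∫ z in (0:ℝ)..1, (0:ℝ) := by
    apply intervalIntegral.integral_congr
    intro z hz
    rw [uIcc_of_le zero_le_one] at hz
    simp only
    rw [if_neg (by rcases hz with ⟨h0, _⟩; intro hlt; linarith)]
  rw [this]; simp

lemma evalIf_pos (h : ℝ → ℝ) (u : ℝ) (hu0 : 0 ≤ u) (hu1 : u ≤ 1) :
    (∫ z in (0:ℝ)..1, (if z < u then h z else 0)) = ∫ z in (0:ℝ)..u, h z := by
  rw [intervalIntegral.integral_of_le zero_le_one, intervalIntegral.integral_of_le hu0]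
  have hind : ∀ z : ℝ, (if z < u then h z else 0) = (Iio u).indicator h z := by
    intro z; simp [indicator_apply, mem_Iio]
  simp_rw [hind]
  rw [MeasureTheory.integral_indicator measurableSet_Iio, Measure.restrict_restrict measurableSet_Iio]
  have hs : Iio u ∩ Ioc 0 1 = Ioo 0 u := by
    ext z
    simp only [mem_inter_iff, mem_Iio, mem_Ioc, mem_Ioo]
    constructor
    · rintro ⟨h1, h2, _⟩; exact ⟨h2, h1⟩
    · rintro ⟨h1, h2⟩; exact ⟨h2, h1, by linarith⟩
  rw [hs, ← integral_Ioc_eq_integral_Ioo]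

lemma sliceIf (g : ℝ → ℝ) (z : ℝ) (hz0 : 0 ≤ z) (hz1 : z ≤ 1) :
    (∫ w in (0:ℝ)..1, (if z ≤ w then g w else 0)) = ∫ w in z..1, g w := by
  rw [intervalIntegral.integral_of_le zero_le_one, intervalIntegral.integral_of_le hz1]
  have hind : ∀ w : ℝ, (if z ≤ w then g w else 0) = (Ici z).indicator g w := by
    intro w; simp [indicator_apply, mem_Ici]
  simp_rw [hind]
  rw [MeasureTheory.integral_indicator measurableSet_Ici, Measure.restrict_restrict measurableSet_Ici]
  apply MeasureTheory.setIntegral_congr_set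
  have h1 : (Ici z ∩ Ioc 0 1 : Set ℝ) \ Ioc z 1 ⊆ {z} := by
    intro w hw
    simp only [mem_diff, mem_inter_iff, mem_Ici, mem_Ioc, not_and, not_le, mem_singleton_iff] at hw ⊢
    rcases hw with ⟨⟨hwz, h0w, hw1⟩, hbad⟩
    by_contra hne
    have : z < w := lt_of_le_of_ne hwz (Ne.symm hne)
    linarith [hbad this]
  have h2 : Ioc z 1 \ (Ici z ∩ Ioc 0 1 : Set ℝ) ⊆ (∅ : Set ℝ) := by
    intro w hw
    simp only [mem_diff, mem_Ioc, mem_inter_iff, mem_Ici, not_and, not_le] at hw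
    rcases hw with ⟨⟨hzw, hw1⟩, hbad⟩
    have := hbad hzw.le (by linarith)
    linarith
  have hnull1 : volume ((Ici z ∩ Ioc 0 1 : Set ℝ) \ Ioc z 1) = 0 :=
    measure_mono_null h1 (measure_singleton z)
  have hnull2 : volume (Ioc z 1 \ (Ici z ∩ Ioc 0 1 : Set ℝ)) = 0 :=
    measure_mono_null h2 (by simp)
  rw [MeasureTheory.ae_eq_set]
  exact ⟨hnull1, hnull2⟩


def c1F (x y : ℝ) : ℝ := (1+y)/2 - x
def c2F (x y : ℝ) : ℝ := min (1/4 + y - x) ((1+y)/2 - x)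
def AF (n : ℕ) (y : ℝ) : ℝ := 2*(n:ℝ)*((n:ℝ)-1)*y^(n-2)
def BF (n : ℕ) (y : ℝ) : ℝ := 4*(n:ℝ)*((n:ℝ)-1)*(max (2*y-1) 0)^(n-2)
def DF (n : ℕ) (x y z : ℝ) : ℝ := 2*(n:ℝ)*((n:ℝ)-1)*(max (3*y-2*x-2*z) 0)^(n-2)
def gF (n : ℕ) (x y w : ℝ) : ℝ :=
  (if w < c1F x y then AF n y else 0) + (if w < c2F x y then DF n x y w - BF n y else 0)
def psiF (n : ℕ) (x y z : ℝ) : ℝ :=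
  AF n y * ((x-y) + min z (c1F x y))
    - (n:ℝ)*(max (y - 2*((x-y) + min z (c2F x y))) 0)^(n-1)
    + (n:ℝ)*y^(n-1)
    - BF n y * ((x-y) + min z (c2F x y))

lemma c2F_le_c1F (x y : ℝ) : c2F x y ≤ c1F x y := min_le_right _ _

lemma psi_eq_G (n : ℕ) (hn : 3 ≤ n) (G : ℝ → ℝ → ℝ) (fA : ℝ → ℝ)
    (hfA : ∀ y : ℝ, fA y
      = (n:ℝ) * y ^ (n-2) * (y + ((n:ℝ) - 1) * (1 - y))
        - (n:ℝ) * (max (2*y - 1) 0) ^ (n-2) * (2 * ((n:ℝ) - 1) * (1 - y) + 2*y - 1))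
    (hG1 : ∀ y ∈ Icc (0:ℝ) 1, ∀ t : ℝ, 0 ≤ t → t ≤ min ((1 - y)/2) (1/4) →
      G t y = 2 * (n:ℝ) * ((n:ℝ) - 1) * y ^ (n-2) * t
        - (n:ℝ) * (max (y - 2*t) 0) ^ (n-1) + (n:ℝ) * y ^ (n-1)
        - 4 * (n:ℝ) * ((n:ℝ) - 1) * (max (2*y - 1) 0) ^ (n-2) * t)
    (hG2 : ∀ y ∈ Icc (0:ℝ) 1, ∀ t : ℝ, 1/4 ≤ t → t ≤ (1 - y)/2 →
      G t y = 2 * (n:ℝ) * ((n:ℝ) - 1) * y ^ (n-2) * t + (n:ℝ) * y ^ (n-1))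
    (hG3 : ∀ y ∈ Icc (0:ℝ) 1, ∀ t : ℝ, (1 - y)/2 ≤ t → G t y = fA y)
    (x : ℝ) (hx0 : 0 ≤ x) (hx1 : x ≤ 1)
    (y : ℝ) (hy0 : 0 ≤ y) (hyx : y ≤ x)
    (z : ℝ) (hz0 : 0 ≤ z) (hz1 : z ≤ 1) :
    psiF n x y z = G (x - y + z) y := by
  have hy1 : y ≤ 1 := le_trans hyx hx1
  have hyI : y ∈ Icc (0:ℝ) 1 := ⟨hy0, hy1⟩
  have e1 : n - 1 = (n-2)+1 := by omega
  have ht0 : (0:ℝ) ≤ x - y + z := by linarith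
  rcases le_total z (c2F x y) with hzc2 | hzc2
  · -- region 1
    have hzc1 : z ≤ c1F x y := le_trans hzc2 (c2F_le_c1F x y)
    have hmin1 : min z (c1F x y) = z := min_eq_left hzc1
    have hmin2 : min z (c2F x y) = z := min_eq_left hzc2
    have hub : x - y + z ≤ min ((1 - y)/2) (1/4) := by
      apply le_min
      · have := hzc1; simp only [c1F] at this; linarith
      · have := le_trans hzc2 (min_le_left _ _); linarith
    rw [hG1 y hyI (x-y+z) ht0 hub]
    simp only [psiF]
    rw [hmin1, hmin2]
    simp only [AF, BF]
  · rcases le_total z (c1F x y) with hzc1 | hzc1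
    · -- middle region
      have hmin1 : min z (c1F x y) = z := min_eq_left hzc1
      have hmin2 : min z (c2F x y) = c2F x y := min_eq_right hzc2
      rcases le_total y (1/2) with hy2 | hy2
      · have hc2 : c2F x y = 1/4 + y - x := by
          apply min_eq_left; linarith
        have hquarter : 1/4 ≤ x - y + z := by
          rw [hc2] at hzc2; linarith
        have hhalf : x - y + z ≤ (1 - y)/2 := by
          simp only [c1F] at hzc1; linarith
        rw [hG2 y hyI (x-y+z) hquarter hhalf]
        simp only [psiF]
        rw [hmin1, hmin2, hc2]
        simp only [AF, BF]
        rw [show y - 2*((x-y) + (1/4 + y - x)) = y - 1/2 by ring]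
        rw [max_eq_right (by linarith : y - 1/2 ≤ 0),
            max_eq_right (by linarith : 2*y - 1 ≤ 0),
            zero_pow (by omega : n - 1 ≠ 0), zero_pow (by omega : n - 2 ≠ 0)]
        ring
      · have hc2 : c2F x y = c1F x y := by
          simp only [c1F]; apply min_eq_right; linarith
        have hzeq : z = c1F x y := le_antisymm hzc1 (by rw [← hc2]; exact hzc2)
        have harg : x - y + z = (1-y)/2 := by rw [hzeq]; simp only [c1F]; ring
        rw [hG3 y hyI (x-y+z) (le_of_eq harg.symm), hfA]
        simp only [psiF]
        rw [hmin1, hmin2, hc2]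
        rw [show (x-y) + c1F x y = (1-y)/2 by simp only [c1F]; ring]
        rw [show y - 2*((1-y)/2) = 2*y-1 by ring]
        simp only [AF, BF]
        rw [max_eq_left (by linarith : (0:ℝ) ≤ 2*y-1), e1, pow_succ, pow_succ, harg]
        ring
    · -- region 3
      have hmin1 : min z (c1F x y) = c1F x y := min_eq_right hzc1
      have hmin2 : min z (c2F x y) = c2F x y :=
        min_eq_right (le_trans (c2F_le_c1F x y) hzc1)
      have hlb : (1 - y)/2 ≤ x - y + z := by
        simp only [c1F] at hzc1; linarith
      rw [hG3 y hyI (x-y+z) hlb, hfA]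
      simp only [psiF]
      rw [hmin1, hmin2]
      rcases le_total y (1/2) with hy2 | hy2
      · have hc2 : c2F x y = 1/4 + y - x := by
          apply min_eq_left; linarith
        rw [hc2, show (x-y) + c1F x y = (1-y)/2 by simp only [c1F]; ring]
        rw [show y - 2*((x-y) + (1/4 + y - x)) = y - 1/2 by ring]
        simp only [AF, BF]
        rw [max_eq_right (by linarith : y - 1/2 ≤ 0),
            max_eq_right (by linarith : 2*y - 1 ≤ 0),
            zero_pow (by omega : n - 1 ≠ 0), zero_pow (by omega : n - 2 ≠ 0),
            e1, pow_succ]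
        ring
      · have hc2 : c2F x y = c1F x y := by
          simp only [c1F]; apply min_eq_right; linarith
        rw [hc2, show (x-y) + c1F x y = (1-y)/2 by simp only [c1F]; ring]
        rw [show y - 2*((1-y)/2) = 2*y-1 by ring]
        simp only [AF, BF]
        rw [max_eq_left (by linarith : (0:ℝ) ≤ 2*y-1), e1, pow_succ, pow_succ]
        ring

lemma psi_continuous (n : ℕ) (x y : ℝ) : Continuous (psiF n x y) := by
  unfold psiF c1F c2F AF BF
  fun_prop

lemma if_lt_intervalIntegrable (c : ℝ) (φ : ℝ → ℝ) (hφ : Continuous φ) (a b : ℝ) :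
    IntervalIntegrable (fun w => if w < c then φ w else 0) volume a b := by
  have hind : (fun w => if w < c then φ w else 0) = (Iio c).indicator φ := by
    funext w; simp [Set.indicator_apply, mem_Iio]
  rw [hind, intervalIntegrable_iff]
  exact (intervalIntegrable_iff.mp (hφ.intervalIntegrable a b)).indicator measurableSet_Iio

lemma g_intervalIntegrable (n : ℕ) (x y a b : ℝ) :
    IntervalIntegrable (gF n x y) volume a b := by
  unfold gF
  apply IntervalIntegrable.add
  · exact if_lt_intervalIntegrable _ _ continuous_const a b
  · apply if_lt_intervalIntegrable
    unfold DF BF; fun_prop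

lemma g_measurable (n : ℕ) (x y : ℝ) : Measurable (gF n x y) := by
  unfold gF
  apply Measurable.add
  · exact Measurable.ite measurableSet_Iio measurable_const measurable_const
  · apply Measurable.ite measurableSet_Iio _ measurable_const
    apply Measurable.sub _ measurable_const
    unfold DF; fun_prop

lemma g_bound (n : ℕ) (hn : 3 ≤ n) (x y : ℝ) (hx0 : 0 ≤ x) (hy : y ∈ Icc (0:ℝ) 1) :
    ∀ w : ℝ, 0 ≤ w → |gF n x y w| ≤ 2*(n:ℝ)*((n:ℝ)-1)*(3 + 3^(n-2)) := by
  intro w hw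
  have hn1 : (0:ℝ) ≤ (n:ℝ) - 1 := by
    have : (3:ℝ) ≤ (n:ℝ) := by exact_mod_cast hn
    linarith
  have hn0 : (0:ℝ) ≤ (n:ℝ) := by positivity
  have hy0 := hy.1; have hy1 := hy.2
  have hA : |AF n y| ≤ 2*(n:ℝ)*((n:ℝ)-1) := by
    unfold AF
    rw [abs_of_nonneg (by positivity)]
    have h2 : y^(n-2) ≤ 1 := pow_le_one₀ hy0 hy1
    have hpos : (0:ℝ) ≤ 2*(n:ℝ)*((n:ℝ)-1) := by positivity
    nlinarith [h2, hpos]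
  have hB : |BF n y| ≤ 4*(n:ℝ)*((n:ℝ)-1) := by
    unfold BF
    rw [abs_of_nonneg (by positivity)]
    have h1 : max (2*y-1) 0 ≤ 1 := by
      apply max_le (by linarith) zero_le_one
    have h2 : (max (2*y-1) 0)^(n-2) ≤ 1 := pow_le_one₀ (le_max_right _ _) h1
    have hpos : (0:ℝ) ≤ 4*(n:ℝ)*((n:ℝ)-1) := by positivity
    nlinarith [h2, hpos]
  have hD : |DF n x y w| ≤ 2*(n:ℝ)*((n:ℝ)-1)*3^(n-2) := by
    unfold DF
    rw [abs_of_nonneg (by positivity)]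
    have h1 : max (3*y-2*x-2*w) 0 ≤ 3 := by
      apply max_le (by linarith) (by norm_num)
    have h2 : (max (3*y-2*x-2*w) 0)^(n-2) ≤ 3^(n-2) :=
      pow_le_pow_left₀ (le_max_right _ _) h1 _
    have hpos : (0:ℝ) ≤ 2*(n:ℝ)*((n:ℝ)-1) := by positivity
    nlinarith [h2, hpos]
  unfold gF
  have h3 : (0:ℝ) ≤ 3^(n-2) := by positivity
  calc |(if w < c1F x y then AF n y else 0) + (if w < c2F x y then DF n x y w - BF n y else 0)|
      ≤ |if w < c1F x y then AF n y else 0| + |if w < c2F x y then DF n x y w - BF n y else 0| :=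
        abs_add_le _ _
    _ ≤ 2*(n:ℝ)*((n:ℝ)-1)*(3 + 3^(n-2)) := by
        have e1 : |if w < c1F x y then AF n y else 0| ≤ 2*(n:ℝ)*((n:ℝ)-1) := by
          split
          · exact hA
          · simp; positivity
        have e2 : |if w < c2F x y then DF n x y w - BF n y else 0|
            ≤ 2*(n:ℝ)*((n:ℝ)-1)*3^(n-2) + 4*(n:ℝ)*((n:ℝ)-1) := by
          split
          · calc |DF n x y w - BF n y| ≤ |DF n x y w| + |BF n y| := abs_sub _ _
              _ ≤ _ := add_le_add hD hB
          · simp; positivity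
        nlinarith [e1, e2]

lemma psi_deriv (n : ℕ) (hn : 3 ≤ n) (x y : ℝ) (w : ℝ) :
    HasDerivWithinAt (psiF n x y) (gF n x y w) (Ioi w) w := by
  have base1 := min_hasDerivWithinAt (c1F x y) w
  have base2 := min_hasDerivWithinAt (c2F x y) w
  have h1 : HasDerivWithinAt (fun z => AF n y * ((x-y) + min z (c1F x y)))
      (AF n y * (if w < c1F x y then (1:ℝ) else 0)) (Ioi w) w :=
    (base1.const_add (x-y)).const_mul (AF n y)
  have b4 : HasDerivWithinAt (fun z => y - 2*((x-y) + min z (c2F x y)))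
      (-(2 * (if w < c2F x y then (1:ℝ) else 0))) (Ioi w) w :=
    ((base2.const_add (x-y)).const_mul (2:ℝ)).const_sub y
  set V := y - 2*((x-y) + min w (c2F x y)) with hV
  have h2outer : HasDerivAt (fun v : ℝ => max v 0 ^ (n-1))
      ((↑(n-1) : ℝ) * max V 0 ^ (n-1-1)) V := maxPow_hasDerivAt (n-1) (by omega) V
  have h2 : HasDerivWithinAt (fun z => max (y - 2*((x-y) + min z (c2F x y))) 0 ^ (n-1))
      ((↑(n-1) : ℝ) * max V 0 ^ (n-1-1) * (-(2 * (if w < c2F x y then (1:ℝ) else 0))))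
      (Ioi w) w := h2outer.comp_hasDerivWithinAt (h := fun z => y - 2*((x-y) + min z (c2F x y))) w b4
  have h3 : HasDerivWithinAt (fun z => BF n y * ((x-y) + min z (c2F x y)))
      (BF n y * (if w < c2F x y then (1:ℝ) else 0)) (Ioi w) w :=
    (base2.const_add (x-y)).const_mul (BF n y)
  have htot := ((h1.sub (h2.const_mul (n:ℝ))).add_const ((n:ℝ)*y^(n-1))).sub h3
  have hfun : (fun z => AF n y * ((x-y) + min z (c1F x y))
      - (n:ℝ) * (max (y - 2*((x-y) + min z (c2F x y))) 0 ^ (n-1)) + (n:ℝ)*y^(n-1)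
      - BF n y * ((x-y) + min z (c2F x y))) = psiF n x y := by
    funext z; unfold psiF; ring
  replace htot : HasDerivWithinAt (fun z => AF n y * ((x-y) + min z (c1F x y))
      - (n:ℝ) * (max (y - 2*((x-y) + min z (c2F x y))) 0 ^ (n-1)) + (n:ℝ)*y^(n-1)
      - BF n y * ((x-y) + min z (c2F x y))) _ (Ioi w) w := htot
  rw [hfun] at htot
  convert htot using 1
  have hc : ((n-1 : ℕ) : ℝ) = (n:ℝ) - 1 := by
    have : (1:ℕ) ≤ n := by omega
    push_cast [Nat.cast_sub this]; ring
  have he : n - 1 - 1 = n - 2 := by omega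
  by_cases hw2 : w < c2F x y
  · have hmin : min w (c2F x y) = w := min_eq_left hw2.le
    have hVe : V = 3*y - 2*x - 2*w := by rw [hV, hmin]; ring
    unfold gF DF
    rw [hVe, hc, he]
    by_cases hw1 : w < c1F x y
    · simp only [if_pos hw1, if_pos hw2]; ring
    · simp only [if_neg hw1, if_pos hw2]; ring
  · unfold gF
    by_cases hw1 : w < c1F x y
    · simp only [if_pos hw1, if_neg hw2]; ring
    · simp only [if_neg hw1, if_neg hw2]; ring

lemma fubini_step (g f F : ℝ → ℝ) (hg : Measurable g) (Cg : ℝ)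
    (hgbd : ∀ w ∈ Icc (0:ℝ) 1, |g w| ≤ Cg)
    (hfi : IntegrableOn f (Icc (0:ℝ) 1))
    (hF : ∀ t : ℝ, F t = ∫ z in (0:ℝ)..t, f z) :
    (∫ z in (0:ℝ)..1, (∫ w in z..1, g w) * f z) = ∫ w in (0:ℝ)..1, g w * F w := by
  have hfio : IntegrableOn f (Ioc (0:ℝ) 1) := hfi.mono_set Ioc_subset_Icc_self
  set μ1 := volume.restrict (Ioc (0:ℝ) 1) with hμ1
  have step1 : (∫ z in (0:ℝ)..1, (∫ w in z..1, g w) * f z)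
      = ∫ z in (0:ℝ)..1, (∫ w in (0:ℝ)..1, (if z ≤ w then g w * f z else 0)) := by
    apply intervalIntegral.integral_congr
    intro z hz
    rw [uIcc_of_le zero_le_one] at hz
    simp only
    rw [← sliceIf g z hz.1 hz.2, ← intervalIntegral.integral_mul_const]
    apply intervalIntegral.integral_congr
    intro w _
    simp only
    split <;> simp
  rw [step1]
  set H : ℝ × ℝ → ℝ := fun p => if p.1 ≤ p.2 then g p.2 * f p.1 else 0 with hH
  have hmeasset : MeasurableSet {p : ℝ × ℝ | p.1 ≤ p.2} :=
    measurableSet_le measurable_fst measurable_snd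
  have h1 : AEStronglyMeasurable (fun p : ℝ × ℝ => g p.2 * f p.1) (μ1.prod μ1) :=
    ((hg.comp measurable_snd).aestronglyMeasurable).mul hfio.aestronglyMeasurable.comp_fst
  have hHaesm : AEStronglyMeasurable H (μ1.prod μ1) := by
    have he : H = ({p : ℝ × ℝ | p.1 ≤ p.2}).indicator (fun p => g p.2 * f p.1) := by
      funext p; simp [hH, Set.indicator_apply, mem_setOf_eq]
    rw [he]; exact h1.indicator hmeasset
  have hCg0 : 0 ≤ Cg := le_trans (abs_nonneg _) (hgbd 1 (by norm_num))
  have hcst : Integrable (fun _ : ℝ => Cg) μ1 := by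
    refine integrable_const_iff.mpr (Or.inr ?_)
    infer_instance
  have hmaj : Integrable (fun p : ℝ × ℝ => ‖f p.1‖ * Cg) (μ1.prod μ1) :=
    Integrable.mul_prod hfio.norm hcst
  have hbound : ∀ᵐ p ∂(μ1.prod μ1), ‖H p‖ ≤ ‖f p.1‖ * Cg := by
    rw [hμ1, Measure.prod_restrict]
    refine (ae_restrict_iff' (measurableSet_Ioc.prod measurableSet_Ioc)).2 (ae_of_all _ ?_)
    rintro ⟨z, w⟩ ⟨hz, hw⟩
    simp only [hH]
    split
    · calc ‖g w * f z‖ = ‖f z‖ * |g w| := by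
            rw [norm_mul, mul_comm, Real.norm_eq_abs, Real.norm_eq_abs]
        _ ≤ ‖f z‖ * Cg := mul_le_mul_of_nonneg_left (hgbd w ⟨hw.1.le, hw.2⟩) (norm_nonneg _)
    · simp only [norm_zero]
      positivity
  have hHint : Integrable H (μ1.prod μ1) := hmaj.mono' hHaesm hbound
  have hswap := MeasureTheory.integral_integral_swap (f := fun z w => H (z, w)) hHint
  have lhs_eq : (∫ z in (0:ℝ)..1, (∫ w in (0:ℝ)..1, (if z ≤ w then g w * f z else 0)))
      = ∫ z, (∫ w, H (z, w) ∂μ1) ∂μ1 := by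
    rw [intervalIntegral.integral_of_le zero_le_one]
    apply setIntegral_congr_fun measurableSet_Ioc
    intro z _
    exact intervalIntegral.integral_of_le zero_le_one
  rw [lhs_eq, hswap]
  rw [intervalIntegral.integral_of_le zero_le_one]
  apply setIntegral_congr_fun measurableSet_Ioc
  intro w hw
  simp only [hH]
  have hpull : (∫ z, (if z ≤ w then g w * f z else 0) ∂μ1)
      = g w * ∫ z, (if z ≤ w then f z else 0) ∂μ1 := by
    rw [← MeasureTheory.integral_const_mul]
    congr 1; funext z; split <;> simp
  rw [hpull]
  congr 1
  have hind : (fun z => if z ≤ w then f z else 0) = (Iic w).indicator f := by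
    funext z; simp [Set.indicator_apply, mem_Iic]
  rw [hind, MeasureTheory.integral_indicator measurableSet_Iic,
      hμ1, Measure.restrict_restrict measurableSet_Iic]
  have hset : Iic w ∩ Ioc 0 1 = Ioc 0 w := by
    ext z
    simp only [mem_inter_iff, mem_Iic, mem_Ioc]
    constructor
    · rintro ⟨h1, h2, _⟩; exact ⟨h2, h1⟩
    · rintro ⟨h1, h2⟩; exact ⟨h2, h1, le_trans h2 hw.2⟩
  rw [hset, hF w, intervalIntegral.integral_of_le hw.1.le]

lemma Q_intervalIntegrable (x' : ℝ) (hx' : 0 ≤ x') (c : ℝ → ℝ) (hc : Continuous c)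
    (φ : ℝ → ℝ → ℝ) (hφ : Continuous fun p : ℝ × ℝ => φ p.1 p.2)
    (Cφ : ℝ) (hφbd : ∀ y ∈ Ioc (0:ℝ) x', ∀ z ∈ Ioc (0:ℝ) 1, |φ y z| ≤ Cφ)
    (F : ℝ → ℝ) (hFc : ContinuousOn F (Icc (0:ℝ) 1)) (CF : ℝ) (hCF0 : 0 ≤ CF)
    (hCF : ∀ z ∈ Ioc (0:ℝ) 1, |F z| ≤ CF) :
    IntervalIntegrable (fun y => ∫ z in (0:ℝ)..1, (if z < c y then φ y z * F z else 0))
      volume 0 x' := by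
  rw [intervalIntegrable_iff, uIoc_of_le hx']
  set μ1 := volume.restrict (Ioc (0:ℝ) 1) with hμ1
  set μ2 := volume.restrict (Ioc (0:ℝ) x') with hμ2
  have hFaesm : AEStronglyMeasurable F μ1 :=
    (hFc.mono Ioc_subset_Icc_self).aestronglyMeasurable measurableSet_Ioc
  have hκ : AEStronglyMeasurable (fun p : ℝ × ℝ => if p.2 < c p.1 then φ p.1 p.2 * F p.2 else 0)
      (μ2.prod μ1) := by
    have hset : MeasurableSet {p : ℝ × ℝ | p.2 < c p.1} :=
      measurableSet_lt measurable_snd (hc.comp continuous_fst).measurable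
    have h1 : AEStronglyMeasurable (fun p : ℝ × ℝ => φ p.1 p.2 * F p.2) (μ2.prod μ1) :=
      hφ.aestronglyMeasurable.mul hFaesm.comp_snd
    have he : (fun p : ℝ × ℝ => if p.2 < c p.1 then φ p.1 p.2 * F p.2 else 0)
        = ({p : ℝ × ℝ | p.2 < c p.1}).indicator (fun p => φ p.1 p.2 * F p.2) := by
      funext p; simp [Set.indicator_apply, mem_setOf_eq]
    rw [he]; exact h1.indicator hset
  have hQaesm : AEStronglyMeasurable
      (fun y => ∫ z, (if z < c y then φ y z * F z else 0) ∂μ1) μ2 :=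
    hκ.integral_prod_right'
  have hfun : (fun y => ∫ z in (0:ℝ)..1, (if z < c y then φ y z * F z else 0))
      = fun y => ∫ z, (if z < c y then φ y z * F z else 0) ∂μ1 := by
    funext y; rw [intervalIntegral.integral_of_le zero_le_one]
  rw [hfun]
  have hconst : Integrable (fun _ : ℝ => Cφ * CF) μ2 := by
    refine integrable_const_iff.mpr (Or.inr ?_)
    infer_instance
  apply hconst.mono' hQaesm
  rw [hμ2]
  refine (ae_restrict_iff' measurableSet_Ioc).2 (ae_of_all _ ?_)
  intro y hy
  have hCφ0 : 0 ≤ Cφ :=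
    le_trans (abs_nonneg _) (hφbd y hy 1 (by norm_num))
  have hslice : AEStronglyMeasurable (fun z => if z < c y then φ y z * F z else 0)
      (volume.restrict (Ioc (0:ℝ) 1)) := by
    have h1 : AEStronglyMeasurable (fun z => φ y z * F z) (volume.restrict (Ioc (0:ℝ) 1)) :=
      (hφ.comp (Continuous.prodMk_right y)).aestronglyMeasurable.mul hFaesm
    have he : (fun z => if z < c y then φ y z * F z else 0)
        = (Iio (c y)).indicator (fun z => φ y z * F z) := by
      funext z; simp [Set.indicator_apply, mem_Iio]
    rw [he]; exact h1.indicator measurableSet_Iio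
  have hb := MeasureTheory.norm_setIntegral_le_of_norm_le_const (μ := volume)
      (s := Ioc (0:ℝ) 1) (f := fun z => if z < c y then φ y z * F z else 0)
      (C := Cφ * CF)
      (by rw [Real.volume_Ioc]; norm_num)
      (fun z hz => by
        split
        · rw [Real.norm_eq_abs, abs_mul]
          exact mul_le_mul (hφbd y hy z hz) (hCF z hz) (abs_nonneg _) hCφ0
        · simp only [norm_zero]; positivity)
  have hvol : volume.real (Ioc (0:ℝ) 1) = 1 := by
    rw [Real.volume_real_Ioc]; norm_num
  rw [hvol, mul_one] at hb
  exact hb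

lemma FA_hasDerivAt (n : ℕ) (hn : 3 ≤ n) (fA FA : ℝ → ℝ)
    (hfA : ∀ y : ℝ, fA y
      = (n:ℝ) * y ^ (n-2) * (y + ((n:ℝ) - 1) * (1 - y))
        - (n:ℝ) * (max (2*y - 1) 0) ^ (n-2) * (2 * ((n:ℝ) - 1) * (1 - y) + 2*y - 1))
    (hFA : ∀ x : ℝ, FA x
      = 2 * x ^ n + (n:ℝ) * x ^ (n-1) * (1 - x)
        - (max (2*x - 1) 0) ^ n - (n:ℝ) * (max (2*x - 1) 0) ^ (n-1) * (1 - x))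
    (s : ℝ) : HasDerivAt FA (fA s) s := by
  obtain ⟨e, rfl⟩ : ∃ e, n = e + 3 := ⟨n - 3, by omega⟩
  have haff : HasDerivAt (fun s : ℝ => 2*s - 1) 2 s := by
    simpa using ((hasDerivAt_id s).const_mul (2:ℝ)).sub_const 1
  have hM : ∀ m : ℕ, 2 ≤ m → HasDerivAt (fun s : ℝ => max (2*s-1) 0 ^ m)
      ((m:ℝ) * max (2*s-1) 0 ^ (m-1) * 2) s := by
    intro m hm
    exact (maxPow_hasDerivAt m hm (2*s-1)).comp (h := fun s : ℝ => 2*s-1) s haff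
  have d1 : HasDerivAt (fun s : ℝ => 2*s^(e+3)) (2*((↑(e+3):ℝ)*s^(e+2))) s := by
    have := (hasDerivAt_pow (e+3) s).const_mul (2:ℝ)
    simpa using this
  have d2 : HasDerivAt (fun s : ℝ => (↑(e+3):ℝ)*s^(e+2)*(1-s))
      (((↑(e+3):ℝ)*((↑(e+2):ℝ)*s^(e+1)))*(1-s) + ((↑(e+3):ℝ)*s^(e+2))*(-1)) s := by
    have hp : HasDerivAt (fun s : ℝ => (↑(e+3):ℝ)*s^(e+2)) ((↑(e+3):ℝ)*((↑(e+2):ℝ)*s^(e+1))) s := by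
      have := (hasDerivAt_pow (e+2) s).const_mul ((↑(e+3):ℝ))
      simpa using this
    have hq : HasDerivAt (fun s : ℝ => 1 - s) (-1) s := by
      simpa using (hasDerivAt_id s).const_sub (1:ℝ)
    exact hp.mul hq
  have d3 : HasDerivAt (fun s : ℝ => max (2*s-1) 0 ^ (e+3))
      ((↑(e+3):ℝ) * max (2*s-1) 0 ^ (e+2) * 2) s := by
    have := hM (e+3) (by omega)
    simpa using this
  have d4 : HasDerivAt (fun s : ℝ => (↑(e+3):ℝ) * max (2*s-1) 0 ^ (e+2) * (1-s))
      (((↑(e+3):ℝ)*((↑(e+2):ℝ) * max (2*s-1) 0 ^ (e+1) * 2))*(1-s)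
        + ((↑(e+3):ℝ) * max (2*s-1) 0 ^ (e+2))*(-1)) s := by
    have hp := (hM (e+2) (by omega)).const_mul ((↑(e+3):ℝ))
    have hq : HasDerivAt (fun s : ℝ => 1 - s) (-1) s := by
      simpa using (hasDerivAt_id s).const_sub (1:ℝ)
    simp only [show e + 2 - 1 = e + 1 by omega] at hp
    exact hp.mul hq
  have htot := ((d1.add d2).sub d3).sub d4
  have hFAfun : FA = fun x : ℝ => 2 * x ^ (e+3) + (↑(e+3):ℝ) * x ^ (e+2) * (1 - x)
        - (max (2*x - 1) 0) ^ (e+3) - (↑(e+3):ℝ) * (max (2*x - 1) 0) ^ (e+2) * (1 - x) := by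
    funext x
    rw [hFA x]
    norm_num
  rw [hFAfun]
  refine htot.congr_deriv ?_
  symm
  rw [hfA s]
  norm_num
  rcases le_total (2*s-1) 0 with hc | hc
  · rw [max_eq_right hc]
    push_cast
    ring
  · rw [max_eq_left hc]
    push_cast
    ring

lemma AF_bound (n : ℕ) (hn : 3 ≤ n) (y : ℝ) (hy : y ∈ Icc (0:ℝ) 1) :
    |AF n y| ≤ 2*(n:ℝ)*((n:ℝ)-1) := by
  have hn1 : (0:ℝ) ≤ (n:ℝ) - 1 := by
    have : (3:ℝ) ≤ (n:ℝ) := by exact_mod_cast hn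
    linarith
  have hy0 := hy.1
  have hy1 := hy.2
  unfold AF
  rw [abs_of_nonneg (by positivity)]
  have h2 : y^(n-2) ≤ 1 := pow_le_one₀ hy0 hy1
  have hpos : (0:ℝ) ≤ 2*(n:ℝ)*((n:ℝ)-1) := by positivity
  nlinarith [h2, hpos]

lemma BF_bound (n : ℕ) (hn : 3 ≤ n) (y : ℝ) (hy1 : y ≤ 1) :
    |BF n y| ≤ 4*(n:ℝ)*((n:ℝ)-1) := by
  have hn1 : (0:ℝ) ≤ (n:ℝ) - 1 := by
    have : (3:ℝ) ≤ (n:ℝ) := by exact_mod_cast hn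
    linarith
  unfold BF
  rw [abs_of_nonneg (by positivity)]
  have h1 : max (2*y-1) 0 ≤ 1 := max_le (by linarith) zero_le_one
  have h2 : (max (2*y-1) 0)^(n-2) ≤ 1 := pow_le_one₀ (le_max_right _ _) h1
  have hpos : (0:ℝ) ≤ 4*(n:ℝ)*((n:ℝ)-1) := by positivity
  nlinarith [h2, hpos]

lemma DF_bound (n : ℕ) (hn : 3 ≤ n) (x y z : ℝ) (hx0 : 0 ≤ x) (hy1 : y ≤ 1) (hz0 : 0 ≤ z) :
    |DF n x y z| ≤ 2*(n:ℝ)*((n:ℝ)-1)*3^(n-2) := by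
  have hn1 : (0:ℝ) ≤ (n:ℝ) - 1 := by
    have : (3:ℝ) ≤ (n:ℝ) := by exact_mod_cast hn
    linarith
  unfold DF
  rw [abs_of_nonneg (by positivity)]
  have h1 : max (3*y-2*x-2*z) 0 ≤ 3 := max_le (by linarith) (by norm_num)
  have h2 : (max (3*y-2*x-2*z) 0)^(n-2) ≤ 3^(n-2) :=
    pow_le_pow_left₀ (le_max_right _ _) h1 _
  have hpos : (0:ℝ) ≤ 2*(n:ℝ)*((n:ℝ)-1) := by positivity
  nlinarith [h2, hpos]

theorem stmt_11 (n : ℕ) (hn : 3 ≤ n)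
    (fA FA : ℝ → ℝ) (G : ℝ → ℝ → ℝ)
    (hfA : ∀ y : ℝ, fA y
      = (n:ℝ) * y ^ (n-2) * (y + ((n:ℝ) - 1) * (1 - y))
        - (n:ℝ) * (max (2*y - 1) 0) ^ (n-2) * (2 * ((n:ℝ) - 1) * (1 - y) + 2*y - 1))
    (hFA : ∀ x : ℝ, FA x
      = 2 * x ^ n + (n:ℝ) * x ^ (n-1) * (1 - x)
        - (max (2*x - 1) 0) ^ n - (n:ℝ) * (max (2*x - 1) 0) ^ (n-1) * (1 - x))
    (hG1 : ∀ y ∈ Icc (0:ℝ) 1, ∀ t : ℝ, 0 ≤ t → t ≤ min ((1 - y)/2) (1/4) →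
      G t y = 2 * (n:ℝ) * ((n:ℝ) - 1) * y ^ (n-2) * t
        - (n:ℝ) * (max (y - 2*t) 0) ^ (n-1) + (n:ℝ) * y ^ (n-1)
        - 4 * (n:ℝ) * ((n:ℝ) - 1) * (max (2*y - 1) 0) ^ (n-2) * t)
    (hG2 : ∀ y ∈ Icc (0:ℝ) 1, ∀ t : ℝ, 1/4 ≤ t → t ≤ (1 - y)/2 →
      G t y = 2 * (n:ℝ) * ((n:ℝ) - 1) * y ^ (n-2) * t + (n:ℝ) * y ^ (n-1))
    (hG3 : ∀ y ∈ Icc (0:ℝ) 1, ∀ t : ℝ, (1 - y)/2 ≤ t → G t y = fA y)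
    (f : ℝ → ℝ)
    (hf0 : ∀ z ∈ Icc (0:ℝ) 1, 0 ≤ f z)
    (hfi : MeasureTheory.IntegrableOn f (Icc (0:ℝ) 1))
    (hf1 : (∫ z in (0:ℝ)..1, f z) = 1)
    (F : ℝ → ℝ) (hF : ∀ t : ℝ, F t = ∫ z in (0:ℝ)..t, f z)
    (x : ℝ) (hx : x ∈ Icc (0:ℝ) 1) :
    (∫ y in (0:ℝ)..x, ∫ z in (0:ℝ)..1, G (x - y + z) y * f z)
      = FA x
        - (∫ y in (max (2*x - 1) 0)..x, ∫ z in (0:ℝ)..((1 + y)/2 - x),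
            2 * (n:ℝ) * ((n:ℝ) - 1) * y ^ (n-2) * F z)
        - (∫ y in (max (max (x - 1/4) 0) (2*x - 1))..x,
            ∫ z in (0:ℝ)..(min (1/4 + y - x) ((1 + y)/2 - x)),
              2 * (n:ℝ) * ((n:ℝ) - 1) * (max (3*y - 2*x - 2*z) 0) ^ (n-2) * F z)
        + (∫ y in (max (1/2 : ℝ) (2*x - 1))..(max (1/2 : ℝ) x),
            ∫ z in (0:ℝ)..((1 + y)/2 - x),
              4 * (n:ℝ) * ((n:ℝ) - 1) * (2*y - 1) ^ (n-2) * F z) := by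
  have hx0 := hx.1
  have hx1 := hx.2
  have hn1R : (0:ℝ) ≤ (n:ℝ) - 1 := by
    have : (3:ℝ) ≤ (n:ℝ) := by exact_mod_cast hn
    linarith
  have hfii : IntervalIntegrable f volume 0 1 := by
    rw [intervalIntegrable_iff, uIoc_of_le zero_le_one]
    exact hfi.mono_set Ioc_subset_Icc_self
  have hFcont : ContinuousOn F (Icc (0:ℝ) 1) := by
    rw [show F = fun t => ∫ z in (0:ℝ)..t, f z from funext hF]
    have h := intervalIntegral.continuousOn_primitive_interval
      (a := 0) (b := 1) (μ := volume) (f := f)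
      (by rw [uIcc_of_le zero_le_one]; exact hfi)
    rwa [uIcc_of_le zero_le_one] at h
  set CF := ∫ z in Ioc (0:ℝ) 1, |f z| with hCFdef
  have hCF0 : 0 ≤ CF := setIntegral_nonneg measurableSet_Ioc (fun z _ => abs_nonneg _)
  have hCF : ∀ t ∈ Icc (0:ℝ) 1, |F t| ≤ CF := by
    intro t ht
    rw [hF t, intervalIntegral.integral_of_le ht.1]
    calc |∫ z in Ioc 0 t, f z| ≤ ∫ z in Ioc 0 t, |f z| := by
          simpa [Real.norm_eq_abs] using
            norm_integral_le_integral_norm (μ := volume.restrict (Ioc 0 t)) f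
      _ ≤ CF := by
          apply setIntegral_mono_set (hfi.mono_set Ioc_subset_Icc_self).abs
          · exact Filter.Eventually.of_forall (fun z => abs_nonneg _)
          · exact HasSubset.Subset.eventuallyLE (Ioc_subset_Ioc_right ht.2)
  have hFIoc : IntegrableOn F (Ioc (0:ℝ) 1) := by
    have haesm : AEStronglyMeasurable F (volume.restrict (Ioc (0:ℝ) 1)) :=
      (hFcont.mono Ioc_subset_Icc_self).aestronglyMeasurable measurableSet_Ioc
    have hcst : Integrable (fun _ : ℝ => CF) (volume.restrict (Ioc (0:ℝ) 1)) := by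
      refine integrable_const_iff.mpr (Or.inr ?_)
      infer_instance
    apply hcst.mono' haesm
    refine (ae_restrict_iff' measurableSet_Ioc).2 (ae_of_all _ ?_)
    intro z hz
    rw [Real.norm_eq_abs]
    exact hCF z ⟨hz.1.le, hz.2⟩
  -- the per-y identity
  have key : ∀ y ∈ Icc (0:ℝ) x,
      (∫ z in (0:ℝ)..1, G (x - y + z) y * f z)
        = fA y - (∫ z in (0:ℝ)..1, (if z < c1F x y then AF n y * F z else 0))
          - (∫ z in (0:ℝ)..1, (if z < c2F x y then DF n x y z * F z else 0))
          + (∫ z in (0:ℝ)..1, (if z < c2F x y then BF n y * F z else 0)) := by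
    intro y hy
    have hy0 := hy.1
    have hyx := hy.2
    have hy1 : y ≤ 1 := le_trans hyx hx1
    have hFTC : ∀ z ∈ Icc (0:ℝ) 1, (∫ w in z..1, gF n x y w) = psiF n x y 1 - psiF n x y z := by
      intro z hz
      exact intervalIntegral.integral_eq_sub_of_hasDeriv_right_of_le hz.2
        ((psi_continuous n x y).continuousOn)
        (fun w _ => psi_deriv n hn x y w)
        (g_intervalIntegrable n x y z 1)
    have hpsi1 : psiF n x y 1 = fA y := by
      rw [psi_eq_G n hn G fA hfA hG1 hG2 hG3 x hx0 hx1 y hy0 hyx 1 zero_le_one le_rfl]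
      exact hG3 y ⟨hy0, hy1⟩ (x - y + 1) (by linarith)
    have hgbd : ∀ w ∈ Icc (0:ℝ) 1, |gF n x y w| ≤ 2*(n:ℝ)*((n:ℝ)-1)*(3 + 3^(n-2)) :=
      fun w hw => g_bound n hn x y hx0 ⟨hy0, hy1⟩ w hw.1
    have stepA : (∫ z in (0:ℝ)..1, G (x - y + z) y * f z)
        = ∫ z in (0:ℝ)..1, (fA y * f z - (∫ w in z..1, gF n x y w) * f z) := by
      apply intervalIntegral.integral_congr
      intro z hz
      rw [uIcc_of_le zero_le_one] at hz
      simp only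
      rw [← psi_eq_G n hn G fA hfA hG1 hG2 hG3 x hx0 hx1 y hy0 hyx z hz.1 hz.2,
          hFTC z hz, hpsi1]
      ring
    have hint2 : IntervalIntegrable (fun z => (∫ w in z..1, gF n x y w) * f z) volume 0 1 := by
      rw [intervalIntegrable_iff, uIoc_of_le zero_le_one]
      obtain ⟨C, hC⟩ := IsCompact.exists_bound_of_continuousOn isCompact_Icc
        ((continuous_const.sub (psi_continuous n x y)).continuousOn (s := Icc (0:ℝ) 1))
      have hmain : Integrable (fun z => (psiF n x y 1 - psiF n x y z) * f z)
          (volume.restrict (Ioc (0:ℝ) 1)) := by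
        apply Integrable.bdd_mul (c := C) (hfi.mono_set Ioc_subset_Icc_self)
          ((continuous_const.sub (psi_continuous n x y)).aestronglyMeasurable)
        refine (ae_restrict_iff' measurableSet_Ioc).2 (ae_of_all _ ?_)
        intro z hz
        exact hC z ⟨hz.1.le, hz.2⟩
      apply hmain.congr
      refine (ae_restrict_iff' measurableSet_Ioc).2 (ae_of_all _ ?_)
      intro z hz
      simp only
      rw [hFTC z ⟨hz.1.le, hz.2⟩]
    have stepB : (∫ z in (0:ℝ)..1, (fA y * f z - (∫ w in z..1, gF n x y w) * f z))
        = (∫ z in (0:ℝ)..1, fA y * f z) - ∫ z in (0:ℝ)..1, (∫ w in z..1, gF n x y w) * f z :=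
      intervalIntegral.integral_sub (hfii.const_mul (fA y)) hint2
    have hconst : (∫ z in (0:ℝ)..1, fA y * f z) = fA y := by
      rw [intervalIntegral.integral_const_mul, hf1, mul_one]
    have hfub := fubini_step (gF n x y) f F (g_measurable n x y) _ hgbd hfi hF
    -- split ∫ g F into three pieces
    have iq1 : IntervalIntegrable (fun z => if z < c1F x y then AF n y * F z else 0) volume 0 1 := by
      rw [intervalIntegrable_iff, uIoc_of_le zero_le_one]
      have he : (fun z => if z < c1F x y then AF n y * F z else 0)
          = (Iio (c1F x y)).indicator (fun z => AF n y * F z) := by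
        funext z; simp [Set.indicator_apply, mem_Iio]
      rw [he]
      exact (hFIoc.const_mul (AF n y)).indicator measurableSet_Iio
    have iq2a : IntervalIntegrable (fun z => if z < c2F x y then DF n x y z * F z else 0) volume 0 1 := by
      rw [intervalIntegrable_iff, uIoc_of_le zero_le_one]
      have he : (fun z => if z < c2F x y then DF n x y z * F z else 0)
          = (Iio (c2F x y)).indicator (fun z => DF n x y z * F z) := by
        funext z; simp [Set.indicator_apply, mem_Iio]
      rw [he]
      have hDc : Continuous (fun z => DF n x y z) := by unfold DF; fun_prop
      refine (Integrable.bdd_mul (c := 2*(n:ℝ)*((n:ℝ)-1)*3^(n-2)) hFIoc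
        hDc.aestronglyMeasurable ?_).indicator measurableSet_Iio
      refine (ae_restrict_iff' measurableSet_Ioc).2 (ae_of_all _ ?_)
      intro z hz
      rw [Real.norm_eq_abs]
      exact DF_bound n hn x y z hx0 hy1 hz.1.le
    have iq2b : IntervalIntegrable (fun z => if z < c2F x y then BF n y * F z else 0) volume 0 1 := by
      rw [intervalIntegrable_iff, uIoc_of_le zero_le_one]
      have he : (fun z => if z < c2F x y then BF n y * F z else 0)
          = (Iio (c2F x y)).indicator (fun z => BF n y * F z) := by
        funext z; simp [Set.indicator_apply, mem_Iio]
      rw [he]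
      exact (hFIoc.const_mul (BF n y)).indicator measurableSet_Iio
    have hsplit : (∫ w in (0:ℝ)..1, gF n x y w * F w)
        = (∫ z in (0:ℝ)..1, (if z < c1F x y then AF n y * F z else 0))
          + ((∫ z in (0:ℝ)..1, (if z < c2F x y then DF n x y z * F z else 0))
            - (∫ z in (0:ℝ)..1, (if z < c2F x y then BF n y * F z else 0))) := by
      have hE : ∀ z : ℝ, gF n x y z * F z
          = (if z < c1F x y then AF n y * F z else 0)
            + ((if z < c2F x y then DF n x y z * F z else 0)
              - (if z < c2F x y then BF n y * F z else 0)) := by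
        intro z
        unfold gF
        by_cases h1 : z < c1F x y <;> by_cases h2 : z < c2F x y <;>
          simp only [if_pos, if_neg, h1, h2, if_true, if_false] <;> ring
      simp_rw [hE]
      rw [intervalIntegral.integral_add iq1 (iq2a.sub iq2b),
          intervalIntegral.integral_sub iq2a iq2b]
    rw [stepA, stepB, hconst, hfub, hsplit]
    ring
  -- outer integrals
  have hfAc : Continuous fA := by
    rw [show fA = fun y => (n:ℝ) * y ^ (n-2) * (y + ((n:ℝ) - 1) * (1 - y))
        - (n:ℝ) * (max (2*y - 1) 0) ^ (n-2) * (2 * ((n:ℝ) - 1) * (1 - y) + 2*y - 1)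
      from funext hfA]
    fun_prop
  have hQ1int : IntervalIntegrable
      (fun y => ∫ z in (0:ℝ)..1, (if z < c1F x y then AF n y * F z else 0)) volume 0 x := by
    apply Q_intervalIntegrable x hx0 (fun y => c1F x y) (by unfold c1F; fun_prop)
      (fun y z => AF n y) (by unfold AF; fun_prop)
      (2*(n:ℝ)*((n:ℝ)-1))
      (fun y hy z hz => AF_bound n hn y ⟨hy.1.le, le_trans hy.2 hx1⟩)
      F hFcont CF hCF0 (fun z hz => hCF z ⟨hz.1.le, hz.2⟩)
  have hQ2aint : IntervalIntegrable
      (fun y => ∫ z in (0:ℝ)..1, (if z < c2F x y then DF n x y z * F z else 0)) volume 0 x := by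
    apply Q_intervalIntegrable x hx0 (fun y => c2F x y) (by unfold c2F; fun_prop)
      (fun y z => DF n x y z) (by unfold DF; fun_prop)
      (2*(n:ℝ)*((n:ℝ)-1)*3^(n-2))
      (fun y hy z hz => DF_bound n hn x y z hx0 (le_trans hy.2 hx1) hz.1.le)
      F hFcont CF hCF0 (fun z hz => hCF z ⟨hz.1.le, hz.2⟩)
  have hQ2bint : IntervalIntegrable
      (fun y => ∫ z in (0:ℝ)..1, (if z < c2F x y then BF n y * F z else 0)) volume 0 x := by
    apply Q_intervalIntegrable x hx0 (fun y => c2F x y) (by unfold c2F; fun_prop)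
      (fun y z => BF n y) (by unfold BF; fun_prop)
      (4*(n:ℝ)*((n:ℝ)-1))
      (fun y hy z hz => BF_bound n hn y (le_trans hy.2 hx1))
      F hFcont CF hCF0 (fun z hz => hCF z ⟨hz.1.le, hz.2⟩)
  have houter : (∫ y in (0:ℝ)..x, ∫ z in (0:ℝ)..1, G (x - y + z) y * f z)
      = (∫ y in (0:ℝ)..x, fA y)
        - (∫ y in (0:ℝ)..x, ∫ z in (0:ℝ)..1, (if z < c1F x y then AF n y * F z else 0))
        - (∫ y in (0:ℝ)..x, ∫ z in (0:ℝ)..1, (if z < c2F x y then DF n x y z * F z else 0))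
        + (∫ y in (0:ℝ)..x, ∫ z in (0:ℝ)..1, (if z < c2F x y then BF n y * F z else 0)) := by
    have hcongr : (∫ y in (0:ℝ)..x, ∫ z in (0:ℝ)..1, G (x - y + z) y * f z)
        = ∫ y in (0:ℝ)..x,
            (fA y - (∫ z in (0:ℝ)..1, (if z < c1F x y then AF n y * F z else 0))
              - (∫ z in (0:ℝ)..1, (if z < c2F x y then DF n x y z * F z else 0))
              + (∫ z in (0:ℝ)..1, (if z < c2F x y then BF n y * F z else 0))) := by
      apply intervalIntegral.integral_congr
      intro y hy
      rw [uIcc_of_le hx0] at hy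
      exact key y hy
    rw [hcongr]
    rw [intervalIntegral.integral_add
        (((hfAc.intervalIntegrable 0 x).sub hQ1int).sub hQ2aint) hQ2bint,
        intervalIntegral.integral_sub ((hfAc.intervalIntegrable 0 x).sub hQ1int) hQ2aint,
        intervalIntegral.integral_sub (hfAc.intervalIntegrable 0 x) hQ1int]
  have hfAint : (∫ y in (0:ℝ)..x, fA y) = FA x := by
    rw [intervalIntegral.integral_eq_sub_of_hasDerivAt
      (fun t _ => FA_hasDerivAt n hn fA FA hfA hFA t) (hfAc.intervalIntegrable 0 x)]
    have h0 : max (2*(0:ℝ)-1) 0 = 0 := by norm_num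
    have hFA0 : FA 0 = 0 := by
      rw [hFA 0, h0]
      rw [zero_pow (show n ≠ 0 by omega), zero_pow (show n - 1 ≠ 0 by omega)]
      ring
    rw [hFA0, sub_zero]
  set Q1 : ℝ → ℝ := fun y => ∫ z in (0:ℝ)..1, (if z < c1F x y then AF n y * F z else 0) with hQ1def
  set Q2a : ℝ → ℝ := fun y => ∫ z in (0:ℝ)..1, (if z < c2F x y then DF n x y z * F z else 0) with hQ2adef
  set Q2b : ℝ → ℝ := fun y => ∫ z in (0:ℝ)..1, (if z < c2F x y then BF n y * F z else 0) with hQ2bdef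
  set l1 := max (2*x - 1) 0 with hl1def
  set l2 := max (max (x - 1/4) 0) (2*x - 1) with hl2def
  set l3 := max (1/2 : ℝ) (2*x - 1) with hl3def
  set u3 := max (1/2 : ℝ) x with hu3def
  have hl10 : 0 ≤ l1 := le_max_right _ _
  have hl1x : l1 ≤ x := max_le (by linarith) hx0
  have hl20 : 0 ≤ l2 := le_trans (le_max_right (x - 1/4) 0) (le_max_left _ _)
  have hl2x : l2 ≤ x := max_le (max_le (by linarith) hx0) (by linarith)
  have hmemx : x ∈ uIcc (0:ℝ) x := by rw [uIcc_of_le hx0]; exact ⟨hx0, le_rfl⟩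
  have hmem0 : (0:ℝ) ∈ uIcc (0:ℝ) x := by rw [uIcc_of_le hx0]; exact ⟨le_rfl, hx0⟩
  -- T1
  have hT1 : (∫ y in (0:ℝ)..x, Q1 y)
      = ∫ y in l1..x, ∫ z in (0:ℝ)..((1 + y)/2 - x),
          2 * (n:ℝ) * ((n:ℝ) - 1) * y ^ (n-2) * F z := by
    have hmem : l1 ∈ uIcc (0:ℝ) x := by rw [uIcc_of_le hx0]; exact ⟨hl10, hl1x⟩
    have hsplit := intervalIntegral.integral_add_adjacent_intervals
      (hQ1int.mono_set (uIcc_subset_uIcc hmem0 hmem))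
      (hQ1int.mono_set (uIcc_subset_uIcc hmem hmemx))
    rw [← hsplit]
    have hzero : (∫ y in (0:ℝ)..l1, Q1 y) = 0 := by
      have hptw : ∀ y ∈ uIcc (0:ℝ) l1, Q1 y = 0 := by
        intro y hy
        rw [uIcc_of_le hl10] at hy
        rcases le_or_gt y (2*x - 1) with h | h
        · rw [hQ1def]; simp only
          apply evalIf_neg
          unfold c1F; linarith
        · have hy00 : y = 0 := by
            have h2 : y ≤ l1 := hy.2
            rw [hl1def] at h2
            rcases max_cases (2*x - 1) 0 with ⟨he, _⟩ | ⟨he, _⟩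
            · rw [he] at h2; linarith
            · rw [he] at h2; linarith [hy.1]
          subst hy00
          rw [hQ1def]; simp only
          have hA0 : AF n 0 = 0 := by
            unfold AF; rw [zero_pow (by omega : n - 2 ≠ 0)]; ring
          calc (∫ z in (0:ℝ)..1, if z < c1F x 0 then AF n 0 * F z else 0)
              = ∫ z in (0:ℝ)..1, (0:ℝ) := by
                apply intervalIntegral.integral_congr
                intro z _; simp [hA0]
            _ = 0 := by simp
      rw [intervalIntegral.integral_congr hptw]
      simp
    rw [hzero, zero_add]
    apply intervalIntegral.integral_congr
    intro y hy
    rw [uIcc_of_le hl1x] at hy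
    have h2x : 2*x - 1 ≤ y := le_trans (le_max_left _ _) hy.1
    have hyx' : y ≤ x := hy.2
    rw [hQ1def]; simp only
    rw [evalIf_pos (fun z => AF n y * F z) (c1F x y)
        (by unfold c1F; linarith) (by unfold c1F; linarith)]
    unfold c1F AF
    rfl
  -- T2
  have hT2 : (∫ y in (0:ℝ)..x, Q2a y)
      = ∫ y in l2..x, ∫ z in (0:ℝ)..(min (1/4 + y - x) ((1 + y)/2 - x)),
          2 * (n:ℝ) * ((n:ℝ) - 1) * (max (3*y - 2*x - 2*z) 0) ^ (n-2) * F z := by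
    have hmem : l2 ∈ uIcc (0:ℝ) x := by rw [uIcc_of_le hx0]; exact ⟨hl20, hl2x⟩
    have hsplit := intervalIntegral.integral_add_adjacent_intervals
      (hQ2aint.mono_set (uIcc_subset_uIcc hmem0 hmem))
      (hQ2aint.mono_set (uIcc_subset_uIcc hmem hmemx))
    rw [← hsplit]
    have hzero : (∫ y in (0:ℝ)..l2, Q2a y) = 0 := by
      have hptw : ∀ y ∈ uIcc (0:ℝ) l2, Q2a y = 0 := by
        intro y hy
        rw [uIcc_of_le hl20] at hy
        rcases le_or_gt y (x - 1/4) with h | h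
        · rw [hQ2adef]; simp only
          apply evalIf_neg
          exact le_trans (min_le_left _ _) (by linarith)
        · rcases le_or_gt y (2*x - 1) with h' | h'
          · rw [hQ2adef]; simp only
            apply evalIf_neg
            exact le_trans (min_le_right _ _) (by linarith)
          · have hy00 : y = 0 := by
              have h2 : y ≤ l2 := hy.2
              rw [hl2def] at h2
              rcases max_cases (max (x - 1/4) 0) (2*x - 1) with ⟨he, _⟩ | ⟨he, _⟩
              · rw [he] at h2
                rcases max_cases (x - 1/4) 0 with ⟨he2, _⟩ | ⟨he2, _⟩
                · rw [he2] at h2; linarith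
                · rw [he2] at h2; linarith [hy.1]
              · rw [he] at h2; linarith
            subst hy00
            rw [hQ2adef]; simp only
            calc (∫ z in (0:ℝ)..1, if z < c2F x 0 then DF n x 0 z * F z else 0)
                = ∫ z in (0:ℝ)..1, (0:ℝ) := by
                  apply intervalIntegral.integral_congr
                  intro z hz
                  rw [uIcc_of_le zero_le_one] at hz
                  have hD0 : DF n x 0 z = 0 := by
                    unfold DF
                    rw [max_eq_right (by linarith [hz.1] : 3*(0:ℝ) - 2*x - 2*z ≤ 0),
                        zero_pow (by omega : n - 2 ≠ 0)]
                    ring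
                  simp [hD0]
              _ = 0 := by simp
      rw [intervalIntegral.integral_congr hptw]
      simp
    rw [hzero, zero_add]
    apply intervalIntegral.integral_congr
    intro y hy
    rw [uIcc_of_le hl2x] at hy
    have h14 : x - 1/4 ≤ y := le_trans (le_trans (le_max_left _ _) (le_max_left _ _)) hy.1
    have h2x : 2*x - 1 ≤ y := le_trans (le_max_right _ _) hy.1
    have hyx' : y ≤ x := hy.2
    rw [hQ2adef]; simp only
    rw [evalIf_pos (fun z => DF n x y z * F z) (c2F x y)
        (le_min (by linarith) (by linarith))
        (le_trans (min_le_left _ _) (by linarith))]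
    unfold c2F DF
    rfl
  -- T3
  have hT3 : (∫ y in (0:ℝ)..x, Q2b y)
      = ∫ y in l3..u3, ∫ z in (0:ℝ)..((1 + y)/2 - x),
          4 * (n:ℝ) * ((n:ℝ) - 1) * (2*y - 1) ^ (n-2) * F z := by
    rcases lt_or_ge x (1/2) with hxh | hxh
    · have hm1 : l3 = 1/2 := max_eq_left (by linarith)
      have hm2 : u3 = 1/2 := max_eq_left (by linarith)
      rw [hm1, hm2, intervalIntegral.integral_same]
      have hptw : ∀ y ∈ uIcc (0:ℝ) x, Q2b y = 0 := by
        intro y hy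
        rw [uIcc_of_le hx0] at hy
        have hB0 : BF n y = 0 := by
          unfold BF
          rw [max_eq_right (by linarith [hy.2] : 2*y - 1 ≤ 0),
              zero_pow (by omega : n - 2 ≠ 0)]
          ring
        rw [hQ2bdef]; simp only
        calc (∫ z in (0:ℝ)..1, if z < c2F x y then BF n y * F z else 0)
            = ∫ z in (0:ℝ)..1, (0:ℝ) := by
              apply intervalIntegral.integral_congr
              intro z _; simp [hB0]
          _ = 0 := by simp
      rw [intervalIntegral.integral_congr hptw]
      simp
    · have hm2 : u3 = x := max_eq_right hxh
      have hl30 : 0 ≤ l3 := le_trans (by norm_num) (le_max_left (1/2:ℝ) (2*x-1))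
      have hl3x : l3 ≤ x := max_le hxh (by linarith)
      have hmem : l3 ∈ uIcc (0:ℝ) x := by rw [uIcc_of_le hx0]; exact ⟨hl30, hl3x⟩
      have hsplit := intervalIntegral.integral_add_adjacent_intervals
        (hQ2bint.mono_set (uIcc_subset_uIcc hmem0 hmem))
        (hQ2bint.mono_set (uIcc_subset_uIcc hmem hmemx))
      rw [← hsplit, hm2]
      have hzero : (∫ y in (0:ℝ)..l3, Q2b y) = 0 := by
        have hptw : ∀ y ∈ uIcc (0:ℝ) l3, Q2b y = 0 := by
          intro y hy
          rw [uIcc_of_le hl30] at hy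
          rcases le_or_gt y (1/2) with h | h
          · have hB0 : BF n y = 0 := by
              unfold BF
              rw [max_eq_right (by linarith : 2*y - 1 ≤ 0),
                  zero_pow (by omega : n - 2 ≠ 0)]
              ring
            rw [hQ2bdef]; simp only
            calc (∫ z in (0:ℝ)..1, if z < c2F x y then BF n y * F z else 0)
                = ∫ z in (0:ℝ)..1, (0:ℝ) := by
                  apply intervalIntegral.integral_congr
                  intro z _; simp [hB0]
              _ = 0 := by simp
          · have h2 : y ≤ l3 := hy.2
            rw [hl3def] at h2
            rcases max_cases (1/2:ℝ) (2*x - 1) with ⟨he, _⟩ | ⟨he, _⟩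
            · rw [he] at h2; linarith
            · rw [he] at h2
              rw [hQ2bdef]; simp only
              apply evalIf_neg
              exact le_trans (min_le_right _ _) (by linarith)
        rw [intervalIntegral.integral_congr hptw]
        simp
      rw [hzero, zero_add]
      apply intervalIntegral.integral_congr
      intro y hy
      rw [uIcc_of_le hl3x] at hy
      have hyh : 1/2 ≤ y := le_trans (le_max_left _ _) hy.1
      have h2x : 2*x - 1 ≤ y := le_trans (le_max_right _ _) hy.1
      have hyx' : y ≤ x := hy.2
      rw [hQ2bdef]; simp only
      have hc2 : c2F x y = (1 + y)/2 - x := by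
        unfold c2F; apply min_eq_right; linarith
      rw [hc2]
      rw [evalIf_pos (fun z => BF n y * F z) ((1 + y)/2 - x)
          (by linarith) (by linarith)]
      unfold BF
      simp only [max_eq_left (show (0:ℝ) ≤ 2*y - 1 by linarith)]
  rw [houter, hfAint, hT1, hT2, hT3]


end
end
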